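/- arXiv:2501.05570 — 7 statements merged into one kernel-verified Lean document; each statement's English description precedes it below -/
import Mathlib

section
/- Every connected simple graph on n ≥ 2 vertices has a dominating set of size at most n/2. -/
/-- `D` is a dominating set of `G`: every vertex is in `D` or adjacent to a vertex of `D`. -/
def IsDominatingSet {V : Type*} (G : SimpleGraph V) (D : Finset V) : Prop :=
  ∀ v : V, v ∈ D ∨ ∃ u ∈ D, G.Adj u v

lemma exists_adj_dist_pred {V : Type*} (G : SimpleGraph V) (hconn : G.Connected)
    (r v : V) (h : G.dist r v ≠ 0) :
    ∃ u, G.Adj u v ∧ G.dist r u + 1 = G.dist r v := by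
  obtain ⟨p, hp⟩ := hconn.exists_walk_length_eq_dist r v
  have hrev : p.reverse.length = G.dist r v := by simpa using hp
  cases hpr : p.reverse with
  | nil => rw [hpr] at hrev; simp at hrev; simp at h
  | cons hadj q =>
    rename_i u
    refine ⟨u, hadj.symm, ?_⟩
    have h1 : G.dist r u ≤ q.length := by
      have := SimpleGraph.dist_le q.reverse
      simpa using this
    have h2 : q.length + 1 = G.dist r v := by
      rw [hpr] at hrev; simpa using hrev
    have h3 : G.dist r v ≤ G.dist r u + 1 := by
      calc G.dist r v ≤ G.dist r u + G.dist u v := hconn.dist_triangle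
        _ ≤ G.dist r u + 1 := by
            have : G.dist u v ≤ 1 := by
              have := SimpleGraph.dist_le (SimpleGraph.Walk.cons hadj.symm .nil : G.Walk u v)
              simpa using this
            omega
    omega

/-- Every connected simple graph on `n ≥ 2` vertices has a dominating set of size at most
`n / 2`. -/
theorem connected_exists_dominatingSet_card_le_half {V : Type*} [Fintype V]
    (G : SimpleGraph V) (hconn : G.Connected) (hn : 2 ≤ Fintype.card V) :
    ∃ D : Finset V, IsDominatingSet G D ∧ 2 * D.card ≤ Fintype.card V := by
  classical
  obtain ⟨r⟩ := hconn.nonempty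
  set De : Finset V := Finset.univ.filter (fun v => G.dist r v % 2 = 0) with hDe
  set Do : Finset V := Finset.univ.filter (fun v => ¬ (G.dist r v % 2 = 0)) with hDo
  have hmemE : ∀ v, v ∈ De ↔ G.dist r v % 2 = 0 := by
    intro v; simp [hDe]
  have hmemO : ∀ v, v ∈ Do ↔ ¬ (G.dist r v % 2 = 0) := by
    intro v; simp [hDo, Nat.odd_iff, Nat.not_even_iff_odd, Nat.even_iff]
  have hcard : De.card + Do.card = Fintype.card V := by
    rw [hDe, hDo, Finset.card_filter_add_card_filter_not, Finset.card_univ]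
  have hDedom : IsDominatingSet G De := by
    intro v
    by_cases hv : G.dist r v % 2 = 0
    · left; exact (hmemE v).mpr hv
    · right
      have hne : G.dist r v ≠ 0 := by omega
      obtain ⟨u, hu, hd⟩ := exists_adj_dist_pred G hconn r v hne
      exact ⟨u, (hmemE u).mpr (by omega), hu⟩
  have hDodom : IsDominatingSet G Do := by
    intro v
    by_cases hv : G.dist r v % 2 = 0
    · right
      by_cases hv0 : G.dist r v = 0
      · have hvr : v = r := (hconn.dist_eq_zero_iff.mp (SimpleGraph.dist_comm .. ▸ hv0))
        obtain ⟨w, hw⟩ := Fintype.exists_ne_of_one_lt_card hn r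
        have hdw : G.dist r w ≠ 0 := fun h =>
          hw ((hconn.dist_eq_zero_iff.mp h).symm)
        obtain ⟨p, hp⟩ := hconn.exists_walk_length_eq_dist r w
        cases hp' : p with
        | nil => exact absurd (by rw [← hp, hp']; simp) hdw
        | cons hadj q =>
          rename_i u
          refine ⟨u, ?_, hvr ▸ hadj.symm⟩
          have hle : G.dist r u ≤ 1 := by
            have := SimpleGraph.dist_le (SimpleGraph.Walk.cons hadj .nil : G.Walk r u)
            simpa using this
          have hne : G.dist r u ≠ 0 := fun h =>
            hadj.ne (hconn.dist_eq_zero_iff.mp h)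
          exact (hmemO u).mpr (by omega)
      · obtain ⟨u, hu, hd⟩ := exists_adj_dist_pred G hconn r v hv0
        exact ⟨u, (hmemO u).mpr (by omega), hu⟩
    · left; exact (hmemO v).mpr hv
  rcases le_total De.card Do.card with h | h
  · exact ⟨De, hDedom, by omega⟩
  · exact ⟨Do, hDodom, by omega⟩
end

section
/- For every integer d ≥ 1, every d-regular simple graph on n vertices has a dominating set of size at most (H_{d+1}/(d+1))·n, where H_{d+1} = Σ_{j=1}^{d+1} 1/j is the (d+1)-st harmonic number. -/
open Finset

namespace DomAux

variable {V : Type*} [Fintype V] [DecidableEq V]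

/-- Closed neighborhood as a finset. -/
def Ncl (G : SimpleGraph V) [DecidableRel G.Adj] (v : V) : Finset V :=
  insert v (G.neighborFinset v)

lemma mem_Ncl (G : SimpleGraph V) [DecidableRel G.Adj] {u v : V} :
    u ∈ Ncl G v ↔ u = v ∨ G.Adj v u := by
  simp [Ncl]

lemma Ncl_comm (G : SimpleGraph V) [DecidableRel G.Adj] {u v : V} :
    u ∈ Ncl G v ↔ v ∈ Ncl G u := by
  simp only [mem_Ncl]
  constructor <;> rintro (h | h)
  · exact Or.inl h.symm
  · exact Or.inr h.symm
  · exact Or.inl h.symm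
  · exact Or.inr h.symm

lemma card_Ncl (G : SimpleGraph V) [DecidableRel G.Adj] (v : V) :
    (Ncl G v).card = G.degree v + 1 := by
  rw [Ncl, card_insert_of_notMem (by simp [SimpleGraph.mem_neighborFinset])]
  simp [SimpleGraph.card_neighborFinset_eq_degree]

/-- Harmonic number as a real. -/
noncomputable def H (s : ℕ) : ℝ := ∑ j ∈ Ioc 0 s, (1 : ℝ) / j

lemma H_nonneg (s : ℕ) : 0 ≤ H s :=
  Finset.sum_nonneg fun j _ => by positivity

lemma H_sub {s' s t : ℕ} (h1 : s' ≤ s) (h2 : s ≤ t) (_ht : 1 ≤ t) :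
    ((s : ℝ) - s') / t ≤ H s - H s' := by
  have hsplit : H s' + ∑ j ∈ Ioc s' s, (1 : ℝ) / j = H s :=
    Finset.sum_Ioc_consecutive _ (Nat.zero_le _) h1
  have hconst : ((s : ℝ) - s') / t = ∑ _j ∈ Ioc s' s, (1 : ℝ) / t := by
    rw [Finset.sum_const, Nat.card_Ioc, nsmul_eq_mul, Nat.cast_sub h1]
    ring
  have hle : ∑ _j ∈ Ioc s' s, (1 : ℝ) / t ≤ ∑ j ∈ Ioc s' s, (1 : ℝ) / j := by
    refine Finset.sum_le_sum fun j hj => ?_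
    have hj' := Finset.mem_Ioc.mp hj
    have hj0 : 0 < j := Nat.pos_of_ne_zero (by omega)
    have hjt : j ≤ t := hj'.2.trans h2
    exact one_div_le_one_div_of_le (by exact_mod_cast hj0) (by exact_mod_cast hjt)
  rw [hconst]
  linarith

/-- Double counting: each vertex lies in exactly `d+1` closed neighborhoods. -/
lemma sum_card_Ncl_inter (G : SimpleGraph V) [DecidableRel G.Adj] (d : ℕ)
    (hreg : ∀ v : V, G.degree v = d) (S : Finset V) :
    ∑ w : V, ((Ncl G w ∩ S).card : ℝ) = (d + 1) * S.card := by
  calc ∑ w : V, ((Ncl G w ∩ S).card : ℝ)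
      = ∑ w : V, ∑ u ∈ S, (if u ∈ Ncl G w then (1 : ℝ) else 0) := by
        refine Finset.sum_congr rfl fun w _ => ?_
        rw [Finset.sum_ite_mem, Finset.sum_const, Finset.inter_comm]
        simp
    _ = ∑ u ∈ S, ∑ w : V, (if u ∈ Ncl G w then (1 : ℝ) else 0) := Finset.sum_comm
    _ = ∑ u ∈ S, ∑ w : V, (if w ∈ Ncl G u then (1 : ℝ) else 0) := by
        refine Finset.sum_congr rfl fun u _ => Finset.sum_congr rfl fun w _ => ?_
        rw [if_congr (Ncl_comm G) rfl rfl]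
    _ = ∑ u ∈ S, ((Ncl G u).card : ℝ) := by
        refine Finset.sum_congr rfl fun u _ => ?_
        rw [Finset.sum_ite_mem, Finset.univ_inter, Finset.sum_const]
        simp
    _ = (d + 1) * S.card := by
        have hconst : ∀ u ∈ S, ((Ncl G u).card : ℝ) = (d : ℝ) + 1 := by
          intro u _
          rw [card_Ncl, hreg u]
          push_cast
          ring
        rw [Finset.sum_congr rfl hconst, Finset.sum_const, nsmul_eq_mul]
        ring

/-- Main greedy induction. -/
lemma greedy (G : SimpleGraph V) [DecidableRel G.Adj] (d : ℕ)
    (hreg : ∀ v : V, G.degree v = d) :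
    ∀ n (U : Finset V), U.card ≤ n →
      ∃ D : Finset V, (∀ u ∈ U, ∃ x ∈ D, u ∈ Ncl G x) ∧
        (D.card : ℝ) * (d + 1) ≤ ∑ w : V, H ((Ncl G w ∩ U).card) := by
  intro n
  induction n with
  | zero =>
    intro U hU
    have hUe : U = ∅ := Finset.card_eq_zero.mp (Nat.le_zero.mp hU)
    subst hUe
    refine ⟨∅, fun u hu => absurd hu (Finset.notMem_empty u), ?_⟩
    simp only [Finset.card_empty, Nat.cast_zero, zero_mul]
    exact Finset.sum_nonneg fun w _ => H_nonneg _
  | succ n ih =>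
    intro U hU
    rcases U.eq_empty_or_nonempty with rfl | hne
    · refine ⟨∅, fun u hu => absurd hu (Finset.notMem_empty u), ?_⟩
      simp only [Finset.card_empty, Nat.cast_zero, zero_mul]
      exact Finset.sum_nonneg fun w _ => H_nonneg _
    obtain ⟨u0, hu0⟩ := hne
    obtain ⟨v, -, hv⟩ := Finset.exists_max_image Finset.univ
      (fun w => (Ncl G w ∩ U).card) ⟨u0, Finset.mem_univ u0⟩
    set t := (Ncl G v ∩ U).card with ht_def
    have hu0N : u0 ∈ Ncl G u0 ∩ U :=
      Finset.mem_inter.mpr ⟨(mem_Ncl G).mpr (Or.inl rfl), hu0⟩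
    have ht1 : 1 ≤ t := by
      have h0 : 1 ≤ (Ncl G u0 ∩ U).card := Finset.card_pos.mpr ⟨u0, hu0N⟩
      exact h0.trans (hv u0 (Finset.mem_univ u0))
    set U' := U \ Ncl G v with hU'_def
    have hvU : (Ncl G v ∩ U).Nonempty := Finset.card_pos.mp ht1
    obtain ⟨u1, hu1⟩ := hvU
    have hss : U' ⊂ U := by
      refine Finset.ssubset_iff_of_subset (Finset.sdiff_subset) |>.mpr
        ⟨u1, (Finset.mem_inter.mp hu1).2, ?_⟩
      simp [hU'_def, (Finset.mem_inter.mp hu1).1]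
    have hcard' : U'.card ≤ n := Nat.lt_succ_iff.mp ((Finset.card_lt_card hss).trans_le hU)
    obtain ⟨D', hcov', hD'⟩ := ih U' hcard'
    refine ⟨insert v D', ?_, ?_⟩
    · intro u hu
      by_cases h : u ∈ Ncl G v
      · exact ⟨v, Finset.mem_insert_self _ _, h⟩
      · obtain ⟨x, hx, hxu⟩ := hcov' u (Finset.mem_sdiff.mpr ⟨hu, h⟩)
        exact ⟨x, Finset.mem_insert_of_mem hx, hxu⟩
    · -- cardinality bound
      have hAsd : ∀ w : V, Ncl G w ∩ U' = (Ncl G w ∩ U) \ Ncl G v := by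
        intro w
        ext x
        simp only [hU'_def, Finset.mem_inter, Finset.mem_sdiff]
        tauto
      have hkey : ∀ w : V,
          ((Ncl G w ∩ (U ∩ Ncl G v)).card : ℝ) / t ≤
            H ((Ncl G w ∩ U).card) - H ((Ncl G w ∩ U').card) := by
        intro w
        have hsub : (Ncl G w ∩ U').card ≤ (Ncl G w ∩ U).card := by
          refine Finset.card_le_card (Finset.inter_subset_inter le_rfl Finset.sdiff_subset)
        have hmax : (Ncl G w ∩ U).card ≤ t := hv w (Finset.mem_univ w)
        have hdiff : ((Ncl G w ∩ U).card : ℝ) - (Ncl G w ∩ U').card =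
            ((Ncl G w ∩ (U ∩ Ncl G v)).card : ℝ) := by
          have h3 : ((Ncl G w ∩ U) \ Ncl G v).card + ((Ncl G w ∩ U) ∩ Ncl G v).card
              = (Ncl G w ∩ U).card := Finset.card_sdiff_add_card_inter _ _
          rw [hAsd w, ← Finset.inter_assoc]
          push_cast [← h3]
          ring
        rw [← hdiff]
        exact H_sub hsub hmax ht1
      have hsumkey : (d + 1 : ℝ) ≤
          ∑ w : V, (H ((Ncl G w ∩ U).card) - H ((Ncl G w ∩ U').card)) := by
        have hsum : ∑ w : V, ((Ncl G w ∩ (U ∩ Ncl G v)).card : ℝ) / t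
            = (d + 1 : ℝ) := by
          rw [← Finset.sum_div, sum_card_Ncl_inter G d hreg]
          rw [Finset.inter_comm U (Ncl G v), ← ht_def]
          field_simp
        calc (d + 1 : ℝ) = ∑ w : V, ((Ncl G w ∩ (U ∩ Ncl G v)).card : ℝ) / t := hsum.symm
          _ ≤ _ := Finset.sum_le_sum fun w _ => hkey w
      rw [Finset.sum_sub_distrib] at hsumkey
      have hins : ((insert v D').card : ℝ) ≤ (D'.card : ℝ) + 1 := by
        exact_mod_cast Finset.card_insert_le v D'
      have hd1 : (0 : ℝ) ≤ (d : ℝ) + 1 := by positivity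
      nlinarith [hD', hins, hsumkey]

end DomAux

/-- Every `d`-regular simple graph on `n` vertices (`d ≥ 1`) has a dominating set of size at
most `(H_{d+1}/(d+1)) · n`, where `H_{d+1}` is the `(d+1)`-st harmonic number. -/
theorem regular_exists_dominatingSet_card_le_harmonic {V : Type*} [Fintype V] [DecidableEq V]
    (G : SimpleGraph V) [DecidableRel G.Adj] (d : ℕ) (hd : 1 ≤ d)
    (hreg : ∀ v : V, G.degree v = d) :
    ∃ D : Finset V, IsDominatingSet G D ∧
      (D.card : ℝ) ≤ (∑ j ∈ Finset.Icc 1 (d + 1), (1 : ℝ) / j) / (d + 1) * Fintype.card V := by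
  obtain ⟨D, hcov, hcard⟩ := DomAux.greedy G d hreg (Fintype.card V) Finset.univ
    (by simp)
  refine ⟨D, ?_, ?_⟩
  · intro v
    obtain ⟨x, hx, hvx⟩ := hcov v (Finset.mem_univ v)
    rcases (DomAux.mem_Ncl G).mp hvx with rfl | h
    · exact Or.inl hx
    · exact Or.inr ⟨x, hx, h⟩
  · have hIcc : Finset.Icc 1 (d + 1) = Finset.Ioc 0 (d + 1) := by
      exact Finset.Icc_add_one_left_eq_Ioc ..
    have hH : DomAux.H (d + 1) = ∑ j ∈ Finset.Icc 1 (d + 1), (1 : ℝ) / j := by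
      rw [DomAux.H, hIcc]
    have hconst : ∀ w ∈ (Finset.univ : Finset V),
        DomAux.H ((DomAux.Ncl G w ∩ Finset.univ).card) = DomAux.H (d + 1) := by
      intro w _
      rw [Finset.inter_univ, DomAux.card_Ncl, hreg w]
    have hrhs : ∑ w : V, DomAux.H ((DomAux.Ncl G w ∩ Finset.univ).card)
        = (Fintype.card V : ℝ) * DomAux.H (d + 1) := by
      rw [Finset.sum_congr rfl hconst, Finset.sum_const, Finset.card_univ, nsmul_eq_mul]
    rw [hrhs] at hcard
    have hd1 : (0 : ℝ) < (d : ℝ) + 1 := by positivity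
    rw [← hH, div_mul_eq_mul_div, le_div_iff₀ hd1]
    nlinarith [hcard]
end

section
/- Let F be a field of characteristic two, let A be an n×n symmetric matrix over F with zero diagonal, and let B be a k×n matrix over F with k ≤ n. Then B·A·Bᵀ is again symmetric with zero diagonal, and Pf(B·A·Bᵀ) = Σ_{S ⊆ [n], |S| = k} det(B[·,S]) · Pf(A[S,S]), where B[·,S] is the k×k submatrix of B consisting of the columns indexed by S, and A[S,S] is the principal submatrix of A on the rows and columns indexed by S. -/
open Matrix

/-- `M` is a perfect matching of the finite set `V`, encoded as a finset of unordered pairs: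
no pair is a loop, and every element of `V` lies in exactly one pair of `M`. -/
def IsPerfectMatchingOn {V : Type*} (M : Finset (Sym2 V)) : Prop :=
  (∀ e ∈ M, ¬ e.IsDiag) ∧ ∀ v : V, ∃! e : Sym2 V, e ∈ M ∧ v ∈ e

open scoped Classical in
/-- The Pfaffian of a symmetric matrix `A` (over a field of characteristic two, where no sign
is needed): the sum over all perfect matchings `M` of the index set of the products
`∏_{{u,v} ∈ M} A u v`. -/
noncomputable def pfaffian {V F : Type*} [Fintype V] [DecidableEq V] [CommRing F]
    (A : Matrix V V F) (hA : A.IsSymm) : F :=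
  ∑ M ∈ Finset.univ.filter (fun M : Finset (Sym2 V) => IsPerfectMatchingOn M),
    ∏ e ∈ M, Sym2.lift ⟨fun u v => A u v, fun u v => hA.apply v u⟩ e

section IWAux

open Finset

lemma iw_out_spec {V : Type*} (e : Sym2 V) : e = s(e.out.1, e.out.2) := by
  conv_lhs => rw [← e.out_eq]

lemma iw_mem_out_iff {V : Type*} (e : Sym2 V) (v : V) : v ∈ e ↔ v = e.out.1 ∨ v = e.out.2 := by
  conv_lhs => rw [iw_out_spec e]
  exact Sym2.mem_iff

lemma iw_out_ne {V : Type*} {e : Sym2 V} (he : ¬ e.IsDiag) : e.out.1 ≠ e.out.2 := by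
  intro h
  exact he (by rw [iw_out_spec e, Sym2.mk_isDiag_iff]; exact h)

lemma iw_sym2_lift_out {V β : Type*} (f : {f : V → V → β // ∀ a b, f a b = f b a}) (e : Sym2 V) :
    Sym2.lift f e = f.1 e.out.1 e.out.2 := by
  conv_lhs => rw [iw_out_spec e]
  exact Sym2.lift_mk f _ _

open scoped Classical in
lemma iw_pfaffian_eq_sum_out {V F : Type*} [Fintype V] [DecidableEq V] [CommRing F]
    (A : Matrix V V F) (hA : A.IsSymm) :
    pfaffian A hA = ∑ M ∈ Finset.univ.filter (fun M : Finset (Sym2 V) => IsPerfectMatchingOn M),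
      ∏ e ∈ M, A e.out.1 e.out.2 := by
  unfold pfaffian
  exact Finset.sum_congr rfl fun M _ => Finset.prod_congr rfl fun e _ => iw_sym2_lift_out _ e

lemma iw_pm_prod_decomp {V : Type*} [Fintype V] [DecidableEq V] {R : Type*} [CommMonoid R]
    {M : Finset (Sym2 V)} (hM : IsPerfectMatchingOn M) (f : V → R) :
    ∏ v, f v = ∏ e ∈ M, (f e.out.1 * f e.out.2) := by
  have huniv : (univ : Finset V) = M.biUnion (fun e => {e.out.1, e.out.2}) := by
    ext v
    simp only [mem_univ, true_iff, mem_biUnion, mem_insert, mem_singleton]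
    obtain ⟨e, ⟨heM, hve⟩, -⟩ := hM.2 v
    exact ⟨e, heM, (iw_mem_out_iff e v).mp hve⟩
  have hdisj : (M : Set (Sym2 V)).PairwiseDisjoint
      (fun e : Sym2 V => ({e.out.1, e.out.2} : Finset V)) := by
    intro e he e' he' hne
    simp only [Function.onFun]
    rw [Finset.disjoint_left]
    intro v hv hv'
    have h1 : v ∈ e := (iw_mem_out_iff e v).mpr (by simpa using hv)
    have h2 : v ∈ e' := (iw_mem_out_iff e' v).mpr (by simpa using hv')
    obtain ⟨u, -, huniq⟩ := hM.2 v
    exact hne ((huniq e ⟨he, h1⟩).trans (huniq e' ⟨he', h2⟩).symm)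
  rw [huniv, prod_biUnion hdisj]
  exact Finset.prod_congr rfl fun e he => prod_pair (iw_out_ne (hM.1 e he))

lemma iw_sym2_map_comp_self {V : Type*} [DecidableEq V] (σ : Equiv.Perm V)
    (M : Finset (Sym2 V)) : (M.image (Sym2.map σ)).image (Sym2.map σ.symm) = M := by
  rw [Finset.image_image]
  have : Sym2.map ⇑σ.symm ∘ Sym2.map ⇑σ = id := by
    funext e
    rw [Function.comp_apply, Sym2.map_map]
    simp
  rw [this, Finset.image_id]

lemma iw_pm_image {V : Type*} [DecidableEq V] (σ : Equiv.Perm V) {M : Finset (Sym2 V)}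
    (hM : IsPerfectMatchingOn M) : IsPerfectMatchingOn (M.image (Sym2.map σ)) := by
  constructor
  · intro e' he'
    obtain ⟨e, heM, rfl⟩ := Finset.mem_image.mp he'
    rw [Sym2.isDiag_map σ.injective]
    exact hM.1 e heM
  · intro v
    obtain ⟨e, ⟨heM, hve⟩, huniq⟩ := hM.2 (σ.symm v)
    refine ⟨Sym2.map σ e, ⟨Finset.mem_image_of_mem _ heM, ?_⟩, ?_⟩
    · exact Sym2.mem_map.mpr ⟨σ.symm v, hve, σ.apply_symm_apply v⟩
    · rintro e' ⟨he'M, hve'⟩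
      obtain ⟨e₀, he₀M, rfl⟩ := Finset.mem_image.mp he'M
      obtain ⟨a, hae₀, ha⟩ := Sym2.mem_map.mp hve'
      have : a = σ.symm v := by rw [← ha]; simp
      subst this
      rw [huniq e₀ ⟨he₀M, hae₀⟩]

lemma iw_pfaffian_congr {V F : Type*} [Fintype V] [DecidableEq V] [CommRing F]
    {A B : Matrix V V F} (h : A = B) (hA : A.IsSymm) (hB : B.IsSymm) :
    pfaffian A hA = pfaffian B hB := by subst h; rfl

lemma iw_pfaffian_reindex {V F : Type*} [Fintype V] [DecidableEq V] [CommRing F]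
    (A : Matrix V V F) (hA : A.IsSymm) (σ : Equiv.Perm V) :
    pfaffian (A.submatrix σ σ) (hA.submatrix σ) = pfaffian A hA := by
  classical
  unfold pfaffian
  refine Finset.sum_nbij' (i := fun M => M.image (Sym2.map σ))
    (j := fun M => M.image (Sym2.map σ.symm)) ?_ ?_ ?_ ?_ ?_
  · intro M hM
    simp only [Finset.mem_filter, Finset.mem_univ, true_and] at hM ⊢
    exact iw_pm_image σ hM
  · intro M hM
    simp only [Finset.mem_filter, Finset.mem_univ, true_and] at hM ⊢
    exact iw_pm_image σ.symm hM
  · intro M _; exact iw_sym2_map_comp_self σ M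
  · intro M _
    have := iw_sym2_map_comp_self σ.symm M
    simpa using this
  · intro M _
    rw [Finset.prod_image (fun x _ y _ h => Sym2.map.injective σ.injective h)]
    refine Finset.prod_congr rfl fun e _ => ?_
    refine Sym2.inductionOn e fun a b => ?_
    rw [Sym2.map_pair_eq, Sym2.lift_mk, Sym2.lift_mk]
    rfl

variable {n k : ℕ} {F : Type*} [CommRing F] [CharP F 2]

lemma iw_pfaffian_not_injective {V : Type*} [Fintype V] [DecidableEq V]
    (A : Matrix (Fin n) (Fin n) F) (hA : A.IsSymm)
    (hdiag : ∀ i, A i i = 0) (g : V → Fin n) (hg : ¬ Function.Injective g) :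
    pfaffian (A.submatrix g g) (hA.submatrix g) = 0 := by
  classical
  simp only [Function.Injective, not_forall] at hg
  obtain ⟨u, v, hguv, huv⟩ := hg
  set τ := Equiv.swap u v with hτ
  have hgτ : ∀ x, g (τ x) = g x := by
    intro x
    rcases eq_or_ne x u with rfl | hxu
    · rw [hτ, Equiv.swap_apply_left, ← hguv]
    rcases eq_or_ne x v with rfl | hxv
    · rw [hτ, Equiv.swap_apply_right, hguv]
    · rw [hτ, Equiv.swap_apply_of_ne_of_ne hxu hxv]
  unfold pfaffian
  apply Finset.sum_involution (fun M _ => M.image (Sym2.map τ))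
  · intro M hM
    have : ∏ e ∈ M.image (Sym2.map τ),
        Sym2.lift ⟨fun a b => (A.submatrix g g) a b, fun a b => (hA.submatrix g).apply b a⟩ e
        = ∏ e ∈ M,
          Sym2.lift ⟨fun a b => (A.submatrix g g) a b, fun a b => (hA.submatrix g).apply b a⟩ e := by
      rw [Finset.prod_image (fun x _ y _ h => Sym2.map.injective τ.injective h)]
      refine Finset.prod_congr rfl fun e _ => ?_
      refine Sym2.inductionOn e fun a b => ?_
      rw [Sym2.map_pair_eq, Sym2.lift_mk, Sym2.lift_mk]
      show A (g (τ a)) (g (τ b)) = A (g a) (g b)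
      rw [hgτ, hgτ]
    rw [this]
    exact CharTwo.add_self_eq_zero _
  · intro M hM hne heq
    apply hne
    simp only [Finset.mem_filter, Finset.mem_univ, true_and] at hM
    obtain ⟨e, ⟨heM, hue⟩, -⟩ := hM.2 u
    obtain ⟨a, rfl⟩ := Sym2.mem_iff_exists.mp hue
    have haM : s(v, τ a) ∈ M := by
      rw [← heq]
      have : Sym2.map τ s(u, a) = s(v, τ a) := by
        rw [Sym2.map_pair_eq, hτ, Equiv.swap_apply_left]
      rw [← this]
      exact Finset.mem_image_of_mem _ heM
    have hsuv : s(u, v) ∈ M := by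
      rcases eq_or_ne a v with rfl | hav
      · exact heM
      have hau : a ≠ u := fun h => hM.1 _ heM (by rw [h]; exact Sym2.mk_isDiag_iff.mpr rfl)
      have hτa : τ a = a := by rw [hτ, Equiv.swap_apply_of_ne_of_ne hau hav]
      rw [hτa] at haM
      obtain ⟨e', -, huniq⟩ := hM.2 a
      have h1 : s(u, a) = e' := huniq _ ⟨heM, Sym2.mem_iff.mpr (Or.inr rfl)⟩
      have h2 : s(v, a) = e' := huniq _ ⟨haM, Sym2.mem_iff.mpr (Or.inr rfl)⟩
      exfalso
      have h3 : s(u, a) = s(v, a) := h1.trans h2.symm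
      have : u = v ∨ u = a := Sym2.mem_iff.mp (h3 ▸ (Sym2.mem_iff.mpr (Or.inl rfl) : u ∈ s(u, a)))
      rcases this with h | h
      · exact huv h
      · exact hau h.symm
    apply Finset.prod_eq_zero hsuv
    rw [Sym2.lift_mk]
    show A (g u) (g v) = 0
    rw [← hguv]
    exact hdiag (g u)
  · intro M hM
    have := iw_sym2_map_comp_self τ M
    simpa [hτ] using this
  · intro M hM
    simp only [Finset.mem_filter, Finset.mem_univ, true_and] at hM ⊢
    exact iw_pm_image τ hM

lemma iw_prod_edge_expand {V : Type*} [Fintype V] [DecidableEq V]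
    (A : Matrix (Fin n) (Fin n) F) (B : Matrix V (Fin n) F)
    {M : Finset (Sym2 V)} (hM : IsPerfectMatchingOn M) :
    ∏ e ∈ M, (B * A * Bᵀ) e.out.1 e.out.2
      = ∑ g : V → Fin n, (∏ v, B v (g v)) * ∏ e ∈ M, A (g e.out.1) (g e.out.2) := by
  classical
  have hC : ∀ u w, (B * A * Bᵀ) u w = ∑ p : Fin n × Fin n, B u p.1 * A p.1 p.2 * B w p.2 := by
    intro u w
    calc (B * A * Bᵀ) u w = ∑ j, (∑ i, B u i * A i j) * B w j := by
          simp [Matrix.mul_apply, Matrix.transpose_apply]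
      _ = ∑ j, ∑ i, B u i * A i j * B w j := by simp [Finset.sum_mul]
      _ = ∑ i, ∑ j, B u i * A i j * B w j := Finset.sum_comm
      _ = ∑ p : Fin n × Fin n, B u p.1 * A p.1 p.2 * B w p.2 :=
          (Fintype.sum_prod_type (fun p : Fin n × Fin n => B u p.1 * A p.1 p.2 * B w p.2)).symm
  set E : V → Sym2 V := fun v => (hM.2 v).exists.choose with hE
  have hE1 : ∀ v, E v ∈ M := fun v => (hM.2 v).exists.choose_spec.1
  have hE2 : ∀ v, v ∈ E v := fun v => (hM.2 v).exists.choose_spec.2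
  have hEuniq : ∀ (v : V) (e : Sym2 V), e ∈ M → v ∈ e → e = E v := fun v e he hv =>
    (hM.2 v).unique ⟨he, hv⟩ ⟨hE1 v, hE2 v⟩
  have fact1 : ∀ e ∈ M, E e.out.1 = e := fun e he => (hEuniq _ e he e.out_fst_mem).symm
  have fact2 : ∀ e ∈ M, E e.out.2 = e := fun e he => (hEuniq _ e he e.out_snd_mem).symm
  have hnd : ∀ e ∈ M, e.out.1 ≠ e.out.2 := fun e he => iw_out_ne (hM.1 e he)
  set gOf : ({x // x ∈ M} → Fin n × Fin n) → V → Fin n := fun P v =>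
    if v = (E v).out.1 then (P ⟨E v, hE1 v⟩).1 else (P ⟨E v, hE1 v⟩).2 with hgOf
  set POf : (V → Fin n) → ({x // x ∈ M} → Fin n × Fin n) := fun g e =>
    (g e.1.out.1, g e.1.out.2) with hPOf
  have hright : ∀ P, POf (gOf P) = P := by
    intro P
    funext e
    have h1 : E e.1.out.1 = e.1 := fact1 e.1 e.2
    have h2 : E e.1.out.2 = e.1 := fact2 e.1 e.2
    have key1 : gOf P e.1.out.1 = (P e).1 := by
      show (if e.1.out.1 = (E e.1.out.1).out.1 then (P ⟨E e.1.out.1, hE1 _⟩).1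
          else (P ⟨E e.1.out.1, hE1 _⟩).2) = (P e).1
      simp [h1]
    have key2 : gOf P e.1.out.2 = (P e).2 := by
      show (if e.1.out.2 = (E e.1.out.2).out.1 then (P ⟨E e.1.out.2, hE1 _⟩).1
          else (P ⟨E e.1.out.2, hE1 _⟩).2) = (P e).2
      simp only [h2]
      rw [if_neg (Ne.symm (hnd e.1 e.2))]
    show (gOf P e.1.out.1, gOf P e.1.out.2) = P e
    rw [key1, key2]
  calc ∏ e ∈ M, (B * A * Bᵀ) e.out.1 e.out.2
      = ∏ e : {x // x ∈ M}, ∑ p : Fin n × Fin n,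
          B e.1.out.1 p.1 * A p.1 p.2 * B e.1.out.2 p.2 := by
        rw [← Finset.prod_coe_sort]
        exact Finset.prod_congr rfl fun e _ => hC _ _
    _ = ∑ P ∈ Fintype.piFinset (fun _ : {x // x ∈ M} => (Finset.univ : Finset (Fin n × Fin n))),
          ∏ e : {x // x ∈ M}, B e.1.out.1 (P e).1 * A (P e).1 (P e).2 * B e.1.out.2 (P e).2 :=
        Finset.prod_univ_sum _ _
    _ = ∑ P : ({x // x ∈ M} → Fin n × Fin n),
          ∏ e : {x // x ∈ M}, B e.1.out.1 (P e).1 * A (P e).1 (P e).2 * B e.1.out.2 (P e).2 := by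
        rw [Fintype.piFinset_univ]
    _ = ∑ g : V → Fin n, (∏ v, B v (g v)) * ∏ e ∈ M, A (g e.out.1) (g e.out.2) := by
        refine Finset.sum_nbij' gOf POf (fun _ _ => Finset.mem_univ _)
          (fun _ _ => Finset.mem_univ _) ?_ ?_ ?_
        · intro P _
          exact hright P
        · intro g _
          funext v
          show (if v = (E v).out.1 then (POf g ⟨E v, hE1 v⟩).1 else (POf g ⟨E v, hE1 v⟩).2) = g v
          by_cases hv : v = (E v).out.1
          · rw [if_pos hv]
            exact (congrArg g hv).symm
          · rw [if_neg hv]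
            have : v = (E v).out.2 := by
              rcases (iw_mem_out_iff (E v) v).mp (hE2 v) with h | h
              · exact absurd h hv
              · exact h
            exact (congrArg g this).symm
        · intro P _
          have hPg : ∀ e : {x // x ∈ M},
              (P e).1 = gOf P e.1.out.1 ∧ (P e).2 = gOf P e.1.out.2 := by
            intro e
            have := congrFun (hright P) e
            rw [hPOf] at this
            exact ⟨(congrArg Prod.fst this).symm, (congrArg Prod.snd this).symm⟩
          set g := gOf P
          calc ∏ e : {x // x ∈ M}, B e.1.out.1 (P e).1 * A (P e).1 (P e).2 * B e.1.out.2 (P e).2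
              = ∏ e : {x // x ∈ M}, (B e.1.out.1 (g e.1.out.1) * B e.1.out.2 (g e.1.out.2)) *
                  (A (g e.1.out.1) (g e.1.out.2)) := by
                refine Finset.prod_congr rfl fun e _ => ?_
                rw [(hPg e).1, (hPg e).2]
                ring
            _ = (∏ e : {x // x ∈ M}, B e.1.out.1 (g e.1.out.1) * B e.1.out.2 (g e.1.out.2)) *
                  ∏ e : {x // x ∈ M}, A (g e.1.out.1) (g e.1.out.2) := Finset.prod_mul_distrib
            _ = (∏ v, B v (g v)) * ∏ e ∈ M, A (g e.out.1) (g e.out.2) := by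
                rw [Finset.prod_coe_sort M
                    (fun e => B e.out.1 (g e.out.1) * B e.out.2 (g e.out.2)),
                  Finset.prod_coe_sort M (fun e => A (g e.out.1) (g e.out.2)),
                  ← iw_pm_prod_decomp hM (fun v => B v (g v))]

lemma iw_det_char2 (M : Matrix (Fin k) (Fin k) F) :
    M.det = ∑ σ : Equiv.Perm (Fin k), ∏ i, M i (σ i) := by
  rw [Matrix.det_apply]
  rw [← Equiv.sum_comp (Equiv.inv (Equiv.Perm (Fin k)))]
  refine Finset.sum_congr rfl fun σ _ => ?_
  have hsign : ∀ (u : ℤˣ) (x : F), u • x = x := by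
    intro u x
    rcases Int.units_eq_one_or u with rfl | rfl
    · rw [one_smul]
    · rw [Units.smul_def]
      push_cast
      rw [neg_smul, one_smul, CharTwo.neg_eq]
  rw [hsign]
  show ∏ i, M (σ⁻¹ i) i = ∏ i, M i (σ i)
  rw [← Equiv.prod_comp σ (fun i => M (σ⁻¹ i) i)]
  simp

omit [CharP F 2] in
lemma iw_babt_symm (A : Matrix (Fin n) (Fin n) F) (hA : A.IsSymm)
    (B : Matrix (Fin k) (Fin n) F) : (B * A * Bᵀ).IsSymm := by
  unfold Matrix.IsSymm
  rw [Matrix.transpose_mul, Matrix.transpose_mul, Matrix.transpose_transpose, hA.eq,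
    Matrix.mul_assoc]

lemma iw_babt_diag (A : Matrix (Fin n) (Fin n) F) (hA : A.IsSymm) (hdiag : ∀ i, A i i = 0)
    (B : Matrix (Fin k) (Fin n) F) (i : Fin k) : (B * A * Bᵀ) i i = 0 := by
  have hC : (B * A * Bᵀ) i i = ∑ p : Fin n × Fin n, B i p.1 * A p.1 p.2 * B i p.2 := by
    calc (B * A * Bᵀ) i i = ∑ j, (∑ l, B i l * A l j) * B i j := by
          simp [Matrix.mul_apply, Matrix.transpose_apply]
      _ = ∑ j, ∑ l, B i l * A l j * B i j := by simp [Finset.sum_mul]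
      _ = ∑ l, ∑ j, B i l * A l j * B i j := Finset.sum_comm
      _ = ∑ p : Fin n × Fin n, B i p.1 * A p.1 p.2 * B i p.2 :=
          (Fintype.sum_prod_type (fun p : Fin n × Fin n => B i p.1 * A p.1 p.2 * B i p.2)).symm
  rw [hC]
  apply Finset.sum_involution (fun p _ => (p.2, p.1))
  · intro p _
    have : B i p.2 * A p.2 p.1 * B i p.1 = B i p.1 * A p.1 p.2 * B i p.2 := by
      rw [hA.apply]
      ring
    rw [this]
    exact CharTwo.add_self_eq_zero _
  · intro p _ hp h
    apply hp
    have h21 : p.2 = p.1 := congrArg Prod.fst h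
    rw [← h21, hdiag p.2, mul_zero, zero_mul]
  · intro p _; exact Finset.mem_univ _
  · intro p _; rfl

lemma iw_orderEmbOfFin_congr {S T : Finset (Fin n)} (h : S = T) (hS : S.card = k)
    (hT : T.card = k) (x : Fin k) : S.orderEmbOfFin hS x = T.orderEmbOfFin hT x := by
  subst h; rfl

end IWAux

noncomputable def iwPerm {n k : ℕ} (g : Fin k → Fin n)
    (hc : (Finset.image g Finset.univ).card = k) (hg : Function.Injective g) :
    Equiv.Perm (Fin k) :=
  Equiv.ofBijective
    (fun u => ((Finset.image g Finset.univ).orderIsoOfFin hc).symm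
      ⟨g u, Finset.mem_image_of_mem g (Finset.mem_univ u)⟩)
    (Finite.injective_iff_bijective.mp (fun a b hab => hg (by
      have := congrArg (fun y => (((Finset.image g Finset.univ).orderIsoOfFin hc) y : Fin n)) hab
      simpa using this)))

lemma iwPerm_spec {n k : ℕ} (g : Fin k → Fin n)
    (hc : (Finset.image g Finset.univ).card = k) (hg : Function.Injective g) (u : Fin k) :
    (Finset.image g Finset.univ).orderEmbOfFin hc (iwPerm g hc hg u) = g u := by
  have h1 : ((Finset.image g Finset.univ).orderIsoOfFin hc) (iwPerm g hc hg u)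
      = ⟨g u, Finset.mem_image_of_mem g (Finset.mem_univ u)⟩ :=
    OrderIso.apply_symm_apply _ _
  rw [← Finset.coe_orderIsoOfFin_apply, h1]


set_option maxHeartbeats 2000000 in
/-- The Ishikawa–Wakayama formula over a field of characteristic two: if `A` is an `n × n`
symmetric matrix with zero diagonal and `B` is a `k × n` matrix with `k ≤ n`, then `B * A * Bᵀ`
is again symmetric with zero diagonal, and its Pfaffian equals
`∑_{S ⊆ [n], |S| = k} det B[·, S] · Pf A[S, S]`. -/
theorem pfaffian_ishikawa_wakayama {F : Type*} [Field F] [CharP F 2]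
    (n k : ℕ) (hkn : k ≤ n)
    (A : Matrix (Fin n) (Fin n) F) (hA : A.IsSymm) (hdiag : ∀ i, A i i = 0)
    (B : Matrix (Fin k) (Fin n) F) :
    (B * A * Bᵀ).IsSymm ∧ (∀ i, (B * A * Bᵀ) i i = 0) ∧
      ∀ h : (B * A * Bᵀ).IsSymm,
        pfaffian (B * A * Bᵀ) h =
          ∑ S ∈ (Finset.univ.powersetCard k : Finset (Finset (Fin n))).attach,
            (B.submatrix id
                (S.1.orderEmbOfFin (Finset.mem_powersetCard.mp S.2).2)).det *
              pfaffian
                (A.submatrix (S.1.orderEmbOfFin (Finset.mem_powersetCard.mp S.2).2)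
                  (S.1.orderEmbOfFin (Finset.mem_powersetCard.mp S.2).2))
                (hA.submatrix _) := by
  classical
  refine ⟨iw_babt_symm A hA B, iw_babt_diag A hA hdiag B, fun h => ?_⟩
  set G : (Fin k → Fin n) → F := fun g =>
    (∏ v, B v (g v)) * pfaffian (A.submatrix g g) (hA.submatrix g) with hG
  -- Step 1: expansion over all maps g
  have key : pfaffian (B * A * Bᵀ) h = ∑ g : Fin k → Fin n, G g := by
    rw [iw_pfaffian_eq_sum_out]
    calc ∑ M ∈ Finset.univ.filter (fun M : Finset (Sym2 (Fin k)) => IsPerfectMatchingOn M),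
          ∏ e ∈ M, (B * A * Bᵀ) e.out.1 e.out.2
        = ∑ M ∈ Finset.univ.filter (fun M : Finset (Sym2 (Fin k)) => IsPerfectMatchingOn M),
            ∑ g : Fin k → Fin n, (∏ v, B v (g v)) * ∏ e ∈ M, A (g e.out.1) (g e.out.2) :=
          Finset.sum_congr rfl fun M hM =>
            iw_prod_edge_expand A B (Finset.mem_filter.mp hM).2
      _ = ∑ g : Fin k → Fin n,
            ∑ M ∈ Finset.univ.filter (fun M : Finset (Sym2 (Fin k)) => IsPerfectMatchingOn M),
              (∏ v, B v (g v)) * ∏ e ∈ M, A (g e.out.1) (g e.out.2) := Finset.sum_comm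
      _ = ∑ g : Fin k → Fin n, G g := by
          refine Finset.sum_congr rfl fun g _ => ?_
          rw [← Finset.mul_sum, hG]
          congr 1
          rw [iw_pfaffian_eq_sum_out]
          rfl
  rw [key]
  -- Step 2: only injective g contribute
  rw [← Finset.sum_filter_add_sum_filter_not Finset.univ Function.Injective G]
  have hzero : ∑ g ∈ Finset.univ.filter (fun g : Fin k → Fin n => ¬ Function.Injective g), G g
      = 0 := by
    refine Finset.sum_eq_zero fun g hg => ?_
    rw [hG]
    show (∏ v, B v (g v)) * pfaffian (A.submatrix g g) (hA.submatrix g) = 0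
    rw [iw_pfaffian_not_injective A hA hdiag g (Finset.mem_filter.mp hg).2, mul_zero]
  rw [hzero, add_zero]
  -- Step 3: rewrite RHS as a double sum over subsets and permutations
  have hRHS : ∀ S : {x // x ∈ (Finset.univ.powersetCard k : Finset (Finset (Fin n)))},
      (B.submatrix id (S.1.orderEmbOfFin (Finset.mem_powersetCard.mp S.2).2)).det *
        pfaffian
          (A.submatrix (S.1.orderEmbOfFin (Finset.mem_powersetCard.mp S.2).2)
            (S.1.orderEmbOfFin (Finset.mem_powersetCard.mp S.2).2))
          (hA.submatrix _)
      = ∑ σ : Equiv.Perm (Fin k),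
          G (⇑(S.1.orderEmbOfFin (Finset.mem_powersetCard.mp S.2).2) ∘ ⇑σ) := by
    intro S
    rw [iw_det_char2, Finset.sum_mul]
    refine Finset.sum_congr rfl fun σ _ => ?_
    rw [hG]
    show (∏ i, (B.submatrix id (S.1.orderEmbOfFin (Finset.mem_powersetCard.mp S.2).2)) i (σ i)) *
        pfaffian _ _ = _
    congr 1
    rw [← iw_pfaffian_reindex
      (A.submatrix (S.1.orderEmbOfFin (Finset.mem_powersetCard.mp S.2).2)
        (S.1.orderEmbOfFin (Finset.mem_powersetCard.mp S.2).2))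
      (hA.submatrix _) σ]
    exact iw_pfaffian_congr (by rw [Matrix.submatrix_submatrix]) _ _
  -- injectivity facts
  have hcard : ∀ (g : Fin k → Fin n), Function.Injective g →
      (Finset.image g Finset.univ).card = k := fun g hg => by
    rw [Finset.card_image_of_injective _ hg, Finset.card_univ, Fintype.card_fin]
  have himg : ∀ (g : Fin k → Fin n), Function.Injective g →
      Finset.image g Finset.univ ∈ (Finset.univ.powersetCard k : Finset (Finset (Fin n))) :=
    fun g hg => Finset.mem_powersetCard.mpr ⟨Finset.subset_univ _, hcard g hg⟩
  have hleft : ∀ (g : Fin k → Fin n) (hg : Function.Injective g),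
      ⇑((Finset.image g Finset.univ).orderEmbOfFin (hcard g hg)) ∘ ⇑(iwPerm g (hcard g hg) hg)
        = g := fun g hg => funext fun u => iwPerm_spec g (hcard g hg) hg u
  calc ∑ g ∈ Finset.univ.filter (fun g : Fin k → Fin n => Function.Injective g), G g
      = ∑ x ∈ (Finset.univ.powersetCard k : Finset (Finset (Fin n))).attach ×ˢ
            (Finset.univ : Finset (Equiv.Perm (Fin k))),
          G (⇑(x.1.1.orderEmbOfFin (Finset.mem_powersetCard.mp x.1.2).2) ∘ ⇑x.2) := by
        refine Finset.sum_bij'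
          (i := fun g hg => (⟨Finset.image g Finset.univ,
            himg g (Finset.mem_filter.mp hg).2⟩,
            iwPerm g (hcard g (Finset.mem_filter.mp hg).2) (Finset.mem_filter.mp hg).2))
          (j := fun x _ => ⇑(x.1.1.orderEmbOfFin (Finset.mem_powersetCard.mp x.1.2).2) ∘ ⇑x.2)
          ?_ ?_ ?_ ?_ ?_
        · intro g hg
          exact Finset.mem_product.mpr ⟨Finset.mem_attach _ _, Finset.mem_univ _⟩
        · intro x hx
          refine Finset.mem_filter.mpr ⟨Finset.mem_univ _, ?_⟩
          exact (x.1.1.orderEmbOfFin (Finset.mem_powersetCard.mp x.1.2).2).injective.comp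
            x.2.injective
        · intro g hg
          exact hleft g (Finset.mem_filter.mp hg).2
        · rintro ⟨⟨S, hSmem⟩, σ⟩ hx
          have hginj : Function.Injective
              (⇑(S.orderEmbOfFin (Finset.mem_powersetCard.mp hSmem).2) ∘ ⇑σ) :=
            (S.orderEmbOfFin (Finset.mem_powersetCard.mp hSmem).2).injective.comp σ.injective
          have hSet : Finset.image
              (⇑(S.orderEmbOfFin (Finset.mem_powersetCard.mp hSmem).2) ∘ ⇑σ) Finset.univ = S := by
            apply Finset.eq_of_subset_of_card_le
            · intro y hy
              obtain ⟨u, -, rfl⟩ := Finset.mem_image.mp hy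
              exact S.orderEmbOfFin_mem (Finset.mem_powersetCard.mp hSmem).2 (σ u)
            · rw [Finset.card_image_of_injective _ hginj, Finset.card_univ, Fintype.card_fin]
              exact le_of_eq (Finset.mem_powersetCard.mp hSmem).2
          simp only [Prod.mk.injEq]
          constructor
          · exact Subtype.ext hSet
          · refine Equiv.ext fun u => ?_
            have hgoal : ((Finset.image
                (⇑(S.orderEmbOfFin (Finset.mem_powersetCard.mp hSmem).2) ∘ ⇑σ)
                Finset.univ).orderIsoOfFin (hcard _ hginj)).symm
                ⟨(⇑(S.orderEmbOfFin (Finset.mem_powersetCard.mp hSmem).2) ∘ ⇑σ) u,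
                  Finset.mem_image_of_mem _ (Finset.mem_univ u)⟩ = σ u := by
              rw [OrderIso.symm_apply_eq]
              refine Subtype.ext ?_
              rw [Finset.coe_orderIsoOfFin_apply]
              exact (iw_orderEmbOfFin_congr hSet (hcard _ hginj)
                (Finset.mem_powersetCard.mp hSmem).2 (σ u)).symm ▸ rfl
            exact hgoal
        · intro g hg
          have : (⇑((Finset.image g Finset.univ).orderEmbOfFin
              (Finset.mem_powersetCard.mp (himg g (Finset.mem_filter.mp hg).2)).2)
              ∘ ⇑(iwPerm g (hcard g (Finset.mem_filter.mp hg).2) (Finset.mem_filter.mp hg).2))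
              = g := hleft g (Finset.mem_filter.mp hg).2
          rw [this]
    _ = ∑ S ∈ (Finset.univ.powersetCard k : Finset (Finset (Fin n))).attach,
          ∑ σ : Equiv.Perm (Fin k),
            G (⇑(S.1.orderEmbOfFin (Finset.mem_powersetCard.mp S.2).2) ∘ ⇑σ) :=
        Finset.sum_product' _ _
          (fun (S : {x // x ∈ (Finset.univ.powersetCard k : Finset (Finset (Fin n)))})
            (σ : Equiv.Perm (Fin k)) =>
            G (⇑(S.1.orderEmbOfFin (Finset.mem_powersetCard.mp S.2).2) ∘ ⇑σ))
    _ = ∑ S ∈ (Finset.univ.powersetCard k : Finset (Finset (Fin n))).attach,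
          (B.submatrix id (S.1.orderEmbOfFin (Finset.mem_powersetCard.mp S.2).2)).det *
            pfaffian
              (A.submatrix (S.1.orderEmbOfFin (Finset.mem_powersetCard.mp S.2).2)
                (S.1.orderEmbOfFin (Finset.mem_powersetCard.mp S.2).2))
              (hA.submatrix _) :=
        Finset.sum_congr rfl fun S _ => (hRHS S).symm
end

section
/- Let F be a field, let X be a finite set of variables partitioned into parts X_1, …, X_p, let c_1, …, c_p ≥ 1 be integers, and let P be a multivariate polynomial over F in X such that every monomial appearing in P has degree exactly c_i when restricted to the variables in X_i, for each i ∈ [p]. Then P contains a multilinear monomial m with |supp(m) ∩ X_i| = c_i for every i ∈ [p] if and only if P contains a monomial m with |osupp(m) ∩ X_i| ≥ c_i − 1 for every i ∈ [p]. -/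
/-- Let `X` be a finite set of variables partitioned into parts `X_1, …, X_p` with integers
`c_i ≥ 1`, and let `P` be a polynomial each of whose monomials has degree exactly `c_i` when
restricted to `X_i`.  Then `P` contains a multilinear monomial whose support meets each `X_i`
in exactly `c_i` variables if and only if `P` contains a monomial whose odd support meets each
`X_i` in at least `c_i − 1` variables. -/
theorem multilinear_monomial_iff_oddSupport_monomial {F : Type*} [Field F]
    {X : Type*} [Fintype X] [DecidableEq X]
    (p : ℕ) (parts : Fin p → Finset X)
    (hdisj : ∀ i j : Fin p, i ≠ j → Disjoint (parts i) (parts j))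
    (hcover : ∀ x : X, ∃ i : Fin p, x ∈ parts i)
    (c : Fin p → ℕ) (hc : ∀ i, 1 ≤ c i)
    (P : MvPolynomial X F)
    (hP : ∀ d ∈ P.support, ∀ i, ∑ x ∈ parts i, d x = c i) :
    (∃ d ∈ P.support, (∀ x : X, d x ≤ 1) ∧
        ∀ i, ((parts i).filter (fun x => 0 < d x)).card = c i) ↔
      (∃ d ∈ P.support, ∀ i, c i - 1 ≤ ((parts i).filter (fun x => Odd (d x))).card) := by
  constructor
  · rintro ⟨d, hd, hle, hcard⟩
    refine ⟨d, hd, fun i => ?_⟩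
    have : ((parts i).filter (fun x => Odd (d x))) = ((parts i).filter (fun x => 0 < d x)) := by
      apply Finset.filter_congr
      intro x _
      have := hle x
      rw [Nat.odd_iff]
      omega
    rw [this, hcard i]
    omega
  · rintro ⟨d, hd, hodd⟩
    -- key facts per part
    have key : ∀ i, (∀ x ∈ parts i, d x ≤ 1) ∧
        ((parts i).filter (fun x => 0 < d x)).card = c i := by
      intro i
      have hsum : ∑ x ∈ parts i, d x = c i := hP d hd i
      set k := ((parts i).filter (fun x => Odd (d x))).card with hk
      have hpos : ∀ x ∈ (parts i).filter (fun x => Odd (d x)), 1 ≤ d x := by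
        intro x hx
        have := (Finset.mem_filter.mp hx).2
        rw [Nat.odd_iff] at this
        omega
      have hkle : k ≤ ∑ x ∈ parts i, d x := by
        calc k = ∑ _x ∈ (parts i).filter (fun x => Odd (d x)), 1 :=
              (Finset.card_eq_sum_ones _)
          _ ≤ ∑ x ∈ (parts i).filter (fun x => Odd (d x)), d x :=
              Finset.sum_le_sum hpos
          _ ≤ ∑ x ∈ parts i, d x :=
              Finset.sum_le_sum_of_subset (Finset.filter_subset _ _)
      have hpar : Even (∑ x ∈ parts i, d x) ↔ Even k :=
        Finset.even_sum_iff_even_card_odd _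
      have hk1 : c i - 1 ≤ k := hodd i
      have hkc : k = c i := by
        rw [hsum, Nat.even_iff, Nat.even_iff] at hpar
        omega
      -- filter odd sums exactly k, hence each odd entry = 1 and nothing outside
      have hsumfil : ∑ x ∈ (parts i).filter (fun x => Odd (d x)), d x = k := by
        have h1 : k ≤ ∑ x ∈ (parts i).filter (fun x => Odd (d x)), d x := by
          calc k = ∑ _x ∈ (parts i).filter (fun x => Odd (d x)), 1 :=
                (Finset.card_eq_sum_ones _)
            _ ≤ _ := Finset.sum_le_sum hpos
        have h2 : ∑ x ∈ (parts i).filter (fun x => Odd (d x)), d x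
            ≤ ∑ x ∈ parts i, d x :=
          Finset.sum_le_sum_of_subset (Finset.filter_subset _ _)
        omega
      have hone : ∀ x ∈ (parts i).filter (fun x => Odd (d x)), d x = 1 := by
        intro x hx
        by_contra hne
        have h2 : 2 ≤ d x := by
          have := hpos x hx; omega
        have hsplit : ∑ y ∈ (parts i).filter (fun x => Odd (d x)), d y
            = d x + ∑ y ∈ ((parts i).filter (fun x => Odd (d x))).erase x, d y :=
          (Finset.add_sum_erase _ _ hx).symm
        have hrest : (((parts i).filter (fun x => Odd (d x))).erase x).card
            ≤ ∑ y ∈ ((parts i).filter (fun x => Odd (d x))).erase x, d y := by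
          rw [Finset.card_eq_sum_ones]
          exact Finset.sum_le_sum fun y hy => hpos y (Finset.mem_of_mem_erase hy)
        have hcarde : (((parts i).filter (fun x => Odd (d x))).erase x).card
            = ((parts i).filter (fun x => Odd (d x))).card - 1 :=
          Finset.card_erase_of_mem hx
        have hk0 : 0 < ((parts i).filter (fun x => Odd (d x))).card :=
          Finset.card_pos.mpr ⟨x, hx⟩
        omega
      have hzero : ∀ x ∈ parts i, ¬ Odd (d x) → d x = 0 := by
        intro x hx hnodd
        have hsplit := Finset.sum_filter_add_sum_filter_not (parts i)
          (fun x => Odd (d x)) d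
        have h0 : ∑ y ∈ (parts i).filter (fun x => ¬ Odd (d x)), d y = 0 := by
          omega
        have := (Finset.sum_eq_zero_iff.mp h0) x (Finset.mem_filter.mpr ⟨hx, hnodd⟩)
        exact this
      constructor
      · intro x hx
        by_cases h : Odd (d x)
        · exact le_of_eq (hone x (Finset.mem_filter.mpr ⟨hx, h⟩))
        · simp [hzero x hx h]
      · have : ((parts i).filter (fun x => 0 < d x))
            = ((parts i).filter (fun x => Odd (d x))) := by
          apply Finset.filter_congr
          intro x hx
          constructor
          · intro h
            by_contra hnodd
            have := hzero x hx hnodd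
            omega
          · intro h
            have : d x = 1 := hone x (Finset.mem_filter.mpr ⟨hx, h⟩)
            omega
        rw [this]
        omega
    refine ⟨d, hd, fun x => ?_, fun i => (key i).2⟩
    obtain ⟨i, hi⟩ := hcover x
    exact (key i).1 x hi
end

section
/- Let G = (V, E) be a simple graph, k ≥ 1 an integer, with lists L_f ⊆ {1, …, k} for each f ∈ E. Let e = {v, w} ∈ E and let V_T ⊆ V be a set of vertices with w ∈ V_T and v ∉ V_T, such that e is the unique edge of G with exactly one endpoint in V_T, and the induced subgraph G[V_T ∪ {v}] is a tree. Define L'_e = { i ∈ L_e : the tree G[V_T ∪ {v}] admits a proper list edge coloring with respect to the lists in which e has list {i} and every other edge f keeps L_f }. Let G' be the induced subgraph of G on the vertex set (V ∖ V_T) ∪ {w}. Then G admits a proper list edge coloring with respect to the lists L_f if and only if G' admits a proper list edge coloring with respect to the lists in which e has list L'_e and every other edge f of G' keeps L_f. -/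
/-- `G` admits a proper list edge coloring with respect to the lists `L`: each edge `e` of `G`
can be assigned a color from `L e` so that distinct edges sharing a common endpoint receive
different colors. -/
def HasProperListEdgeColoring {V : Type*} (G : SimpleGraph V) (k : ℕ)
    (L : Sym2 V → Finset (Fin k)) : Prop :=
  ∃ c : Sym2 V → Fin k, (∀ e ∈ G.edgeSet, c e ∈ L e) ∧
    ∀ e₁ ∈ G.edgeSet, ∀ e₂ ∈ G.edgeSet,
      e₁ ≠ e₂ → (∃ x : V, x ∈ e₁ ∧ x ∈ e₂) → c e₁ ≠ c e₂

lemma induce_edge_mem' {V : Type*} {S : Set V} {G : SimpleGraph V} (e : Sym2 S) :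
    e ∈ (G.induce S).edgeSet ↔ Sym2.map Subtype.val e ∈ G.edgeSet := by
  induction e using Sym2.ind with
  | _ a b => simp [SimpleGraph.mem_edgeSet]

lemma lift_exists' {V : Type*} (S : Set V) (f : Sym2 V) :
    (∃ g : Sym2 S, Sym2.map Subtype.val g = f) ↔ ∀ x ∈ f, x ∈ S := by
  constructor
  · rintro ⟨g, rfl⟩ x hx
    obtain ⟨y, _, rfl⟩ := Sym2.mem_map.mp hx
    exact y.2
  · induction f using Sym2.ind with
    | _ a b =>
      intro h
      exact ⟨s(⟨a, h a (by simp)⟩, ⟨b, h b (by simp)⟩), rfl⟩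

lemma mem_lift' {V : Type*} {S : Set V} {f : Sym2 V} (g : Sym2 S) (x : V) (hx : x ∈ S)
    (hg : Sym2.map Subtype.val g = f) (hxf : x ∈ f) : (⟨x, hx⟩ : S) ∈ g := by
  subst hg
  obtain ⟨y, hy, hyx⟩ := Sym2.mem_map.mp hxf
  exact (Subtype.ext hyx : y = ⟨x, hx⟩) ▸ hy

/-- Pruning a pendant tree: if `e = {v, w}` is the unique edge of `G` with exactly one endpoint
in `V_T` (namely `w ∈ V_T`, `v ∉ V_T`), and the induced subgraph on `V_T ∪ {v}` is a tree, then
`G` admits a proper list edge coloring for the lists `L` if and only if the induced subgraph on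
`(V ∖ V_T) ∪ {w}` admits one for the lists where `e` receives the list `L'` of colors `i` such
that the tree admits a proper list edge coloring in which `e` has list `{i}`. -/
theorem hasProperListEdgeColoring_prune_tree {V : Type*} [DecidableEq V]
    (G : SimpleGraph V) (k : ℕ) (hk : 1 ≤ k) (L : Sym2 V → Finset (Fin k))
    (v w : V) (hadj : G.Adj v w) (V_T : Set V) (hw : w ∈ V_T) (hv : v ∉ V_T)
    (huniq : ∀ a b : V, G.Adj a b → a ∈ V_T → b ∉ V_T → s(a, b) = s(v, w))
    (htree : (SimpleGraph.induce (V_T ∪ {v}) G).IsTree)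
    (L' : Finset (Fin k))
    (hL' : ∀ i : Fin k, i ∈ L' ↔ i ∈ L s(v, w) ∧
      HasProperListEdgeColoring (SimpleGraph.induce (V_T ∪ {v}) G) k
        (fun e' => if Sym2.map Subtype.val e' = s(v, w) then {i}
          else L (Sym2.map Subtype.val e'))) :
    HasProperListEdgeColoring G k L ↔
      HasProperListEdgeColoring (SimpleGraph.induce (V_Tᶜ ∪ {w}) G) k
        (fun e' => if Sym2.map Subtype.val e' = s(v, w) then L'
          else L (Sym2.map Subtype.val e')) := by
  classical
  set S_T : Set V := V_T ∪ {v} with hS_Tdef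
  set S' : Set V := V_Tᶜ ∪ {w} with hS'def
  have hvw : v ≠ w := hadj.ne
  have hvT : v ∈ S_T := Or.inr rfl
  have hwT : w ∈ S_T := Or.inl hw
  have hvS' : v ∈ S' := Or.inl hv
  have hwS' : w ∈ S' := Or.inr rfl
  have hevw : s(v, w) ∈ G.edgeSet := hadj
  constructor
  · rintro ⟨c, hc1, hc2⟩
    refine ⟨fun f => c (Sym2.map Subtype.val f), ?_, ?_⟩
    · intro f hf
      rw [induce_edge_mem'] at hf
      beta_reduce
      by_cases hcase : Sym2.map Subtype.val f = s(v, w)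
      · rw [if_pos hcase]
        rw [hL']
        refine ⟨hcase ▸ hc1 _ hf, ⟨fun g => c (Sym2.map Subtype.val g), ?_, ?_⟩⟩
        · intro g hg
          rw [induce_edge_mem'] at hg
          beta_reduce
          by_cases h2 : Sym2.map Subtype.val g = s(v, w)
          · rw [if_pos h2, h2, ← hcase]
            exact Finset.mem_singleton_self _
          · rw [if_neg h2]
            exact hc1 _ hg
        · intro g1 hg1 g2 hg2 hne hx
          obtain ⟨x, hx1, hx2⟩ := hx
          refine hc2 _ ((induce_edge_mem' _).mp hg1) _ ((induce_edge_mem' _).mp hg2)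
            (fun h => hne (Sym2.map.injective Subtype.val_injective h))
            ⟨x.val, Sym2.mem_map.mpr ⟨x, hx1, rfl⟩, Sym2.mem_map.mpr ⟨x, hx2, rfl⟩⟩
      · rw [if_neg hcase]
        exact hc1 _ hf
    · intro g1 hg1 g2 hg2 hne hx
      obtain ⟨x, hx1, hx2⟩ := hx
      refine hc2 _ ((induce_edge_mem' _).mp hg1) _ ((induce_edge_mem' _).mp hg2)
        (fun h => hne (Sym2.map.injective Subtype.val_injective h))
        ⟨x.val, Sym2.mem_map.mpr ⟨x, hx1, rfl⟩, Sym2.mem_map.mpr ⟨x, hx2, rfl⟩⟩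
  · rintro ⟨c', hc1', hc2'⟩
    have eT : Sym2 S_T := s(⟨v, hvT⟩, ⟨w, hwT⟩)
    set e' : Sym2 S' := s(⟨v, hvS'⟩, ⟨w, hwS'⟩) with he'def
    have hmapT : Sym2.map Subtype.val (s(⟨v, hvT⟩, ⟨w, hwT⟩) : Sym2 S_T) = s(v, w) := rfl
    have hmap' : Sym2.map Subtype.val e' = s(v, w) := rfl
    have he' : e' ∈ (G.induce S').edgeSet := (induce_edge_mem' _).mpr (by rw [hmap']; exact hevw)
    set i := c' e' with hidef
    have hiL' : i ∈ L' := by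
      have h := hc1' e' he'
      beta_reduce at h
      rwa [hmap', if_pos rfl] at h
    obtain ⟨hiL, cT, hcT1, hcT2⟩ := (hL' i).mp hiL'
    have heT : (s(⟨v, hvT⟩, ⟨w, hwT⟩) : Sym2 S_T) ∈ (G.induce S_T).edgeSet :=
      (induce_edge_mem' _).mpr (by rw [hmapT]; exact hevw)
    have hcTe : cT s(⟨v, hvT⟩, ⟨w, hwT⟩) = i := by
      have h := hcT1 _ heT
      beta_reduce at h
      rw [if_pos hmapT] at h
      exact Finset.mem_singleton.mp h
    -- classification of edges not inside S_T
    have hclass : ∀ a b : V, G.Adj a b → (a ∉ S_T ∨ b ∉ S_T) → a ∈ S' ∧ b ∈ S' := by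
      have key : ∀ a b : V, G.Adj a b → b ∉ S_T → a ∈ S' ∧ b ∈ S' := by
        intro a b hab hb
        have hbT : b ∉ V_T := fun h => hb (Or.inl h)
        have hbv : b ≠ v := fun h => hb (Or.inr h)
        have haT : a ∉ V_T := by
          intro ha
          have h := huniq a b hab ha hbT
          rw [Sym2.eq_iff] at h
          rcases h with ⟨_, rfl⟩ | ⟨_, rfl⟩
          · exact hbT hw
          · exact hbv rfl
        exact ⟨Or.inl haT, Or.inl hbT⟩
      intro a b hab h
      rcases h with h | h
      · obtain ⟨h1, h2⟩ := key b a hab.symm h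
        exact ⟨h2, h1⟩
      · exact key a b hab h
    have hcover : ∀ f ∈ G.edgeSet, (¬ ∀ x ∈ f, x ∈ S_T) → ∀ x ∈ f, x ∈ S' := by
      intro f
      induction f using Sym2.ind with
      | _ a b =>
        intro hf hno
        have hab : G.Adj a b := hf
        have hor : a ∉ S_T ∨ b ∉ S_T := by
          by_contra hcon
          push_neg at hcon
          refine hno (fun x hx => ?_)
          rcases Sym2.mem_iff.mp hx with rfl | rfl
          exacts [hcon.1, hcon.2]
        have h2 := hclass a b hab hor
        intro x hx
        rcases Sym2.mem_iff.mp hx with rfl | rfl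
        exacts [h2.1, h2.2]
    -- the combined coloring
    set c : Sym2 V → Fin k := fun f =>
      if h : ∃ g : Sym2 S_T, Sym2.map Subtype.val g = f then cT h.choose
      else if h' : ∃ g : Sym2 S', Sym2.map Subtype.val g = f then c' h'.choose
      else ⟨0, hk⟩ with hcdef
    have comp1 : ∀ (f : Sym2 V) (g : Sym2 S_T), Sym2.map Subtype.val g = f → c f = cT g := by
      intro f g hg
      have h : ∃ g' : Sym2 S_T, Sym2.map Subtype.val g' = f := ⟨g, hg⟩
      rw [hcdef]
      simp only [dif_pos h]
      congr 1
      exact Sym2.map.injective Subtype.val_injective (h.choose_spec.trans hg.symm)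
    have comp2 : ∀ (f : Sym2 V) (g : Sym2 S'), Sym2.map Subtype.val g = f →
        (¬ ∃ g' : Sym2 S_T, Sym2.map Subtype.val g' = f) → c f = c' g := by
      intro f g hg hno
      have h : ∃ g' : Sym2 S', Sym2.map Subtype.val g' = f := ⟨g, hg⟩
      rw [hcdef]
      simp only [dif_neg hno, dif_pos h]
      congr 1
      exact Sym2.map.injective Subtype.val_injective (h.choose_spec.trans hg.symm)
    -- the mixed properness case
    have mixed : ∀ fA ∈ G.edgeSet, ∀ fB ∈ G.edgeSet, fA ≠ fB → ∀ x : V, x ∈ fA → x ∈ fB →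
        (∃ g : Sym2 S_T, Sym2.map Subtype.val g = fA) →
        (¬ ∃ g : Sym2 S_T, Sym2.map Subtype.val g = fB) → c fA ≠ c fB := by
      intro fA hfA fB hfB hne x hxA hxB hA hnB
      obtain ⟨gA, hgA⟩ := hA
      have hxT : x ∈ S_T := (lift_exists' S_T fA).mp ⟨gA, hgA⟩ x hxA
      have hallB : ∀ y ∈ fB, y ∈ S' :=
        hcover fB hfB (fun hall => hnB ((lift_exists' S_T fB).mpr hall))
      have hxS' : x ∈ S' := hallB x hxB
      have hxv : x = v := by
        rcases hxT with hxT | hxT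
        · exfalso
          obtain ⟨y, hfBy⟩ := Sym2.mem_iff_exists.mp hxB
          have hyadj : G.Adj x y := by rw [hfBy] at hfB; exact hfB
          by_cases hyVT : y ∈ V_T
          · exact hnB ⟨s(⟨x, Or.inl hxT⟩, ⟨y, Or.inl hyVT⟩), hfBy.symm⟩
          · have h := huniq x y hyadj hxT hyVT
            rw [Sym2.eq_iff] at h
            rcases h with ⟨hxv', _⟩ | ⟨_, hyv⟩
            · exact hv (hxv' ▸ hxT)
            · exact hnB ⟨s(⟨x, Or.inl hxT⟩, ⟨y, Or.inr hyv⟩), hfBy.symm⟩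
        · exact hxT
      obtain ⟨a, hfAa⟩ := Sym2.mem_iff_exists.mp hxA
      have haadj : G.Adj x a := by rw [hfAa] at hfA; exact hfA
      have haT : a ∈ S_T := (lift_exists' S_T fA).mp ⟨gA, hgA⟩ a (by rw [hfAa]; simp)
      have hax : a ≠ x := fun h => G.irrefl (h ▸ haadj)
      have haVT : a ∈ V_T := by
        rcases haT with h | h
        · exact h
        · exact absurd (h.trans hxv.symm) hax
      have hxnT : x ∉ V_T := by rw [hxv]; exact hv
      have h := huniq a x haadj.symm haVT hxnT
      rw [Sym2.eq_iff] at h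
      rcases h with ⟨hav, _⟩ | ⟨haw, _⟩
      · exact absurd (hav.trans hxv.symm) hax
      have hfAvw : fA = s(v, w) := by rw [hfAa, hxv, haw]
      have hcA : c fA = i := by
        rw [hfAvw, comp1 _ s(⟨v, hvT⟩, ⟨w, hwT⟩) hmapT]
        exact hcTe
      obtain ⟨gB, hgB⟩ := (lift_exists' S' fB).mpr hallB
      have hcB : c fB = c' gB := comp2 fB gB hgB hnB
      rw [hcA, hcB, hidef]
      intro hEq
      apply hc2' e' he' gB ((induce_edge_mem' gB).mpr (by rw [hgB]; exact hfB)) ?_ ?_ hEq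
      · intro h
        apply hne
        rw [← hgB, ← h, hmap', ← hfAvw]
      · refine ⟨⟨v, hvS'⟩, by rw [he'def]; simp, ?_⟩
        exact mem_lift' gB v hvS' hgB (hxv ▸ hxB)
    refine ⟨c, ?_, ?_⟩
    · intro f hf
      by_cases hT : ∃ g : Sym2 S_T, Sym2.map Subtype.val g = f
      · obtain ⟨g, hg⟩ := hT
        rw [comp1 f g hg]
        have hgE : g ∈ (G.induce S_T).edgeSet := (induce_edge_mem' g).mpr (by rw [hg]; exact hf)
        have h := hcT1 g hgE
        beta_reduce at h
        by_cases h2 : f = s(v, w)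
        · have hmg : Sym2.map Subtype.val g = s(v, w) := hg.trans h2
          rw [if_pos hmg, Finset.mem_singleton] at h
          rw [h, h2]
          exact hiL
        · have hmg : Sym2.map Subtype.val g ≠ s(v, w) := by rw [hg]; exact h2
          rw [if_neg hmg, hg] at h
          exact h
      · have hall' : ∀ x ∈ f, x ∈ S' :=
          hcover f hf (fun hall => hT ((lift_exists' S_T f).mpr hall))
        obtain ⟨g, hg⟩ := (lift_exists' S' f).mpr hall'
        rw [comp2 f g hg hT]
        have hgE : g ∈ (G.induce S').edgeSet := (induce_edge_mem' g).mpr (by rw [hg]; exact hf)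
        have h := hc1' g hgE
        beta_reduce at h
        have hfne : f ≠ s(v, w) :=
          fun h' => hT ⟨s(⟨v, hvT⟩, ⟨w, hwT⟩), hmapT.trans h'.symm⟩
        rw [hg, if_neg hfne] at h
        exact h
    · intro f1 hf1 f2 hf2 hne hx
      obtain ⟨x, hx1, hx2⟩ := hx
      by_cases h1 : ∃ g : Sym2 S_T, Sym2.map Subtype.val g = f1
      · by_cases h2 : ∃ g : Sym2 S_T, Sym2.map Subtype.val g = f2
        · obtain ⟨g1, hg1⟩ := h1
          obtain ⟨g2, hg2⟩ := h2
          rw [comp1 _ _ hg1, comp1 _ _ hg2]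
          have hxT1 : x ∈ S_T := (lift_exists' S_T f1).mp ⟨g1, hg1⟩ x hx1
          refine hcT2 g1 ((induce_edge_mem' _).mpr (by rw [hg1]; exact hf1))
            g2 ((induce_edge_mem' _).mpr (by rw [hg2]; exact hf2))
            (fun h => hne (by rw [← hg1, ← hg2, h]))
            ⟨⟨x, hxT1⟩, mem_lift' g1 x hxT1 hg1 hx1, mem_lift' g2 x hxT1 hg2 hx2⟩
        · exact mixed f1 hf1 f2 hf2 hne x hx1 hx2 h1 h2
      · by_cases h2 : ∃ g : Sym2 S_T, Sym2.map Subtype.val g = f2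
        · exact (mixed f2 hf2 f1 hf1 (Ne.symm hne) x hx2 hx1 h2 h1).symm
        · obtain ⟨g1, hg1⟩ := (lift_exists' S' f1).mpr
            (hcover f1 hf1 (fun hall => h1 ((lift_exists' S_T f1).mpr hall)))
          obtain ⟨g2, hg2⟩ := (lift_exists' S' f2).mpr
            (hcover f2 hf2 (fun hall => h2 ((lift_exists' S_T f2).mpr hall)))
          rw [comp2 _ _ hg1 h1, comp2 _ _ hg2 h2]
          have hxS1 : x ∈ S' := (lift_exists' S' f1).mp ⟨g1, hg1⟩ x hx1
          refine hc2' g1 ((induce_edge_mem' _).mpr (by rw [hg1]; exact hf1))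
            g2 ((induce_edge_mem' _).mpr (by rw [hg2]; exact hf2))
            (fun h => hne (by rw [← hg1, ← hg2, h]))
            ⟨⟨x, hxS1⟩, mem_lift' g1 x hxS1 hg1 hx1, mem_lift' g2 x hxS1 hg2 hx2⟩
end

section
/- If p ≥ 2 and p ≡ 2 (mod 3), then the path P_p has a dominating set of size (p+1)/3 containing the endpoint 1, it has a dominating set of size (p+1)/3 containing the endpoint p, and no dominating set of P_p of size (p+1)/3 contains both endpoints 1 and p. -/
/-- Closed neighborhood of `d` in the path graph, as a finset. -/
def pathNbhd (p : ℕ) (d : Fin p) : Finset (Fin p) :=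
  Finset.univ.filter (fun v => v = d ∨ d.val + 1 = v.val ∨ v.val + 1 = d.val)

lemma mem_pathNbhd {p : ℕ} {d v : Fin p} :
    v ∈ pathNbhd p d ↔ (v = d ∨ d.val + 1 = v.val ∨ v.val + 1 = d.val) := by
  simp [pathNbhd]

/-- If `p ≥ 2` and `p ≡ 2 (mod 3)`, the path on `p` vertices has a dominating set of size
`(p + 1) / 3` containing the first endpoint, one of that size containing the last endpoint,
but no dominating set of that size contains both endpoints. -/
theorem pathGraph_dominatingSet_mod_two (p : ℕ) (hp : 2 ≤ p) (hmod : p % 3 = 2) :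
    (∃ D : Finset (Fin p), IsDominatingSet (SimpleGraph.pathGraph p) D ∧
      D.card = (p + 1) / 3 ∧ (⟨0, by omega⟩ : Fin p) ∈ D) ∧
    (∃ D : Finset (Fin p), IsDominatingSet (SimpleGraph.pathGraph p) D ∧
      D.card = (p + 1) / 3 ∧ (⟨p - 1, by omega⟩ : Fin p) ∈ D) ∧
    ∀ D : Finset (Fin p), IsDominatingSet (SimpleGraph.pathGraph p) D →
      D.card = (p + 1) / 3 →
      ¬((⟨0, by omega⟩ : Fin p) ∈ D ∧ (⟨p - 1, by omega⟩ : Fin p) ∈ D) := by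
  obtain ⟨k, hk⟩ : ∃ k, p = 3 * k + 2 := ⟨p / 3, by omega⟩
  have hcard3 : (p + 1) / 3 = k + 1 := by omega
  have hmodlt : ∀ m : ℕ, m ≤ 3 * k + 1 → m % p = m := fun m hm => Nat.mod_eq_of_lt (by omega)
  refine ⟨?_, ?_, ?_⟩
  · -- dominating set {0, 3, 6, ..., 3k}
    refine ⟨(Finset.range (k + 1)).image
      (fun i => (⟨3 * i % p, Nat.mod_lt _ (by omega)⟩ : Fin p)), ?_, ?_, ?_⟩
    · intro v
      have hv := v.isLt
      have h3 : v.val % 3 = 0 ∨ v.val % 3 = 1 ∨ v.val % 3 = 2 := by omega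
      rcases h3 with h | h | h
      · left
        refine Finset.mem_image.mpr ⟨v.val / 3, Finset.mem_range.mpr (by omega), ?_⟩
        apply Fin.ext
        show 3 * (v.val / 3) % p = v.val
        rw [hmodlt _ (by omega)]; omega
      · right
        have hlt : 3 * (v.val / 3) < p := by omega
        refine ⟨⟨3 * (v.val / 3), hlt⟩, Finset.mem_image.mpr
          ⟨v.val / 3, Finset.mem_range.mpr (by omega), Fin.ext (hmodlt _ (by omega))⟩, ?_⟩
        rw [SimpleGraph.pathGraph_adj]
        left; show 3 * (v.val / 3) + 1 = v.val; omega
      · right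
        have hvle : v.val ≤ 3 * k - 1 := by omega
        have hlt : 3 * (v.val / 3 + 1) < p := by omega
        refine ⟨⟨3 * (v.val / 3 + 1), hlt⟩, Finset.mem_image.mpr
          ⟨v.val / 3 + 1, Finset.mem_range.mpr (by omega), Fin.ext (hmodlt _ (by omega))⟩, ?_⟩
        rw [SimpleGraph.pathGraph_adj]
        right; show v.val + 1 = 3 * (v.val / 3 + 1); omega
    · rw [Finset.card_image_of_injOn, Finset.card_range, hcard3]
      intro a ha b hb hab
      have ha' := Finset.mem_range.mp ha
      have hb' := Finset.mem_range.mp hb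
      have : 3 * a % p = 3 * b % p := congrArg Fin.val hab
      rw [hmodlt _ (by omega), hmodlt _ (by omega)] at this
      omega
    · refine Finset.mem_image.mpr ⟨0, Finset.mem_range.mpr (by omega), ?_⟩
      apply Fin.ext; show 3 * 0 % p = 0; simp
  · -- dominating set {1, 4, 7, ..., 3k+1}
    refine ⟨(Finset.range (k + 1)).image
      (fun i => (⟨(3 * i + 1) % p, Nat.mod_lt _ (by omega)⟩ : Fin p)), ?_, ?_, ?_⟩
    · intro v
      have hv := v.isLt
      have h3 : v.val % 3 = 0 ∨ v.val % 3 = 1 ∨ v.val % 3 = 2 := by omega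
      rcases h3 with h | h | h
      · right
        have hlt : 3 * (v.val / 3) + 1 < p := by omega
        refine ⟨⟨3 * (v.val / 3) + 1, hlt⟩, Finset.mem_image.mpr
          ⟨v.val / 3, Finset.mem_range.mpr (by omega), Fin.ext (hmodlt _ (by omega))⟩, ?_⟩
        rw [SimpleGraph.pathGraph_adj]
        right; show v.val + 1 = 3 * (v.val / 3) + 1; omega
      · left
        refine Finset.mem_image.mpr ⟨v.val / 3, Finset.mem_range.mpr (by omega), ?_⟩
        apply Fin.ext
        show (3 * (v.val / 3) + 1) % p = v.val
        rw [hmodlt _ (by omega)]; omega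
      · right
        have hlt : 3 * ((v.val - 1) / 3) + 1 < p := by omega
        refine ⟨⟨3 * ((v.val - 1) / 3) + 1, hlt⟩, Finset.mem_image.mpr
          ⟨(v.val - 1) / 3, Finset.mem_range.mpr (by omega), Fin.ext (hmodlt _ (by omega))⟩, ?_⟩
        rw [SimpleGraph.pathGraph_adj]
        left; show 3 * ((v.val - 1) / 3) + 1 + 1 = v.val; omega
    · rw [Finset.card_image_of_injOn, Finset.card_range, hcard3]
      intro a ha b hb hab
      have ha' := Finset.mem_range.mp ha
      have hb' := Finset.mem_range.mp hb
      have : (3 * a + 1) % p = (3 * b + 1) % p := congrArg Fin.val hab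
      rw [hmodlt _ (by omega), hmodlt _ (by omega)] at this
      omega
    · refine Finset.mem_image.mpr ⟨k, Finset.mem_range.mpr (by omega), ?_⟩
      apply Fin.ext
      show (3 * k + 1) % p = p - 1
      rw [hmodlt _ (by omega)]; omega
  · -- impossibility
    rintro D hD hDcard ⟨h0, h1⟩
    set e0 : Fin p := ⟨0, by omega⟩ with he0
    set e1 : Fin p := ⟨p - 1, by omega⟩ with he1
    have hmemN : ∀ d v : Fin p, v ∈ (pathNbhd p d) ↔
        (v = d ∨ d.val + 1 = v.val ∨ v.val + 1 = d.val) := fun d v => mem_pathNbhd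
    -- card of (pathNbhd p d)
    have hNval : ∀ d : Fin p, ((pathNbhd p d)).card ≤ 3 := by
      intro d
      have : ((pathNbhd p d)).image Fin.val ⊆ {d.val - 1, d.val, d.val + 1} := by
        intro x hx
        obtain ⟨v, hv, rfl⟩ := Finset.mem_image.mp hx
        rcases (hmemN d v).mp hv with h | h | h
        · simp [h]
        · simp only [Finset.mem_insert, Finset.mem_singleton]; omega
        · simp only [Finset.mem_insert, Finset.mem_singleton]; omega
      calc ((pathNbhd p d)).card = (((pathNbhd p d)).image Fin.val).card :=
            (Finset.card_image_of_injective _ Fin.val_injective).symm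
        _ ≤ ({d.val - 1, d.val, d.val + 1} : Finset ℕ).card := Finset.card_le_card this
        _ ≤ 3 := by
            apply le_trans (Finset.card_insert_le _ _)
            apply Nat.succ_le_succ
            apply le_trans (Finset.card_insert_le _ _)
            simp
    have hN0 : ((pathNbhd p e0)).card ≤ 2 := by
      have : ((pathNbhd p e0)).image Fin.val ⊆ {0, 1} := by
        intro x hx
        obtain ⟨v, hv, rfl⟩ := Finset.mem_image.mp hx
        rcases (hmemN e0 v).mp hv with h | h | h
        · simp [h, he0]
        · simp only [Finset.mem_insert, Finset.mem_singleton, he0] at h ⊢; omega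
        · simp only [he0] at h; omega
      calc ((pathNbhd p e0)).card = (((pathNbhd p e0)).image Fin.val).card :=
            (Finset.card_image_of_injective _ Fin.val_injective).symm
        _ ≤ ({0, 1} : Finset ℕ).card := Finset.card_le_card this
        _ ≤ 2 := by simp
    have hN1 : ((pathNbhd p e1)).card ≤ 2 := by
      have : ((pathNbhd p e1)).image Fin.val ⊆ {p - 2, p - 1} := by
        intro x hx
        obtain ⟨v, hv, rfl⟩ := Finset.mem_image.mp hx
        rcases (hmemN e1 v).mp hv with h | h | h
        · simp [h, he1]
        · simp only [he1] at h; have := v.isLt; simp only [Finset.mem_insert,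
            Finset.mem_singleton]; omega
        · simp only [he1] at h
          simp only [Finset.mem_insert, Finset.mem_singleton]; omega
      calc ((pathNbhd p e1)).card = (((pathNbhd p e1)).image Fin.val).card :=
            (Finset.card_image_of_injective _ Fin.val_injective).symm
        _ ≤ ({p - 2, p - 1} : Finset ℕ).card := Finset.card_le_card this
        _ ≤ 2 := Finset.card_insert_le _ _ |>.trans (by simp)
    -- coverage
    have hcover : (Finset.univ : Finset (Fin p)) ⊆ D.biUnion (pathNbhd p) := by
      intro v _
      rcases hD v with h | ⟨u, hu, hadj⟩
      · exact Finset.mem_biUnion.mpr ⟨v, h, (hmemN v v).mpr (Or.inl rfl)⟩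
      · refine Finset.mem_biUnion.mpr ⟨u, hu, (hmemN u v).mpr ?_⟩
        rw [SimpleGraph.pathGraph_adj] at hadj
        tauto
    have hne : e0 ≠ e1 := by
      intro h
      have := congrArg Fin.val h
      simp [he0, he1] at this
      omega
    have hsub : ({e0, e1} : Finset (Fin p)) ⊆ D := by
      intro x hx
      rcases Finset.mem_insert.mp hx with rfl | hx
      · exact h0
      · exact (Finset.mem_singleton.mp hx) ▸ h1
    have hcard2 : ({e0, e1} : Finset (Fin p)).card = 2 := by
      rw [Finset.card_insert_of_notMem (by simp [hne]), Finset.card_singleton]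
    have hp_le : p ≤ ∑ d ∈ D, ((pathNbhd p d)).card := by
      calc p = (Finset.univ : Finset (Fin p)).card := by simp
        _ ≤ (D.biUnion (pathNbhd p)).card := Finset.card_le_card hcover
        _ ≤ ∑ d ∈ D, ((pathNbhd p d)).card := Finset.card_biUnion_le
    have hsplit : ∑ d ∈ D, ((pathNbhd p d)).card =
        ∑ d ∈ D \ {e0, e1}, ((pathNbhd p d)).card + ∑ d ∈ ({e0, e1} : Finset (Fin p)), ((pathNbhd p d)).card :=
      (Finset.sum_sdiff hsub).symm
    have hsum2 : ∑ d ∈ ({e0, e1} : Finset (Fin p)), ((pathNbhd p d)).card ≤ 4 := by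
      rw [Finset.sum_pair hne]
      omega
    have hsum1 : ∑ d ∈ D \ {e0, e1}, ((pathNbhd p d)).card ≤ 3 * (D \ {e0, e1}).card := by
      calc ∑ d ∈ D \ {e0, e1}, ((pathNbhd p d)).card ≤ ∑ d ∈ D \ {e0, e1}, 3 :=
            Finset.sum_le_sum fun d _ => hNval d
        _ = 3 * (D \ {e0, e1}).card := by rw [Finset.sum_const]; ring
    have hsd : (D \ {e0, e1}).card = D.card - 2 := by
      rw [Finset.card_sdiff_of_subset hsub, hcard2]
    have hDge : 2 ≤ D.card := hcard2 ▸ Finset.card_le_card hsub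
    omega
end

section
/- Let k, t, h be nonnegative integers with t ≥ 1 and h + t ≤ k, and let L_1, …, L_t ⊆ {1, …, k} be lists such that there exist pairwise distinct colors c_1, …, c_t with c_j ∈ L_j for each j ∈ [t]. Then the family B = { B ⊆ {1, …, k} : |B| = h and there exist pairwise distinct c_1, …, c_t with c_j ∈ L_j ∖ B for all j ∈ [t] } is nonempty and is the collection of bases of a matroid on the ground set {1, …, k}. -/
open Finset

namespace ExtAux

variable {k t : ℕ}

/-- Hall condition for the lists `L j \ X`. -/
def HallCond (L : Fin t → Finset (Fin k)) (X : Finset (Fin k)) : Prop :=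
  ∀ S : Finset (Fin t), S.card ≤ (S.biUnion fun j => L j \ X).card

/-- `S` is a tight set of indices for `I`. -/
def TightSet (L : Fin t → Finset (Fin k)) (I : Finset (Fin k)) (S : Finset (Fin t)) : Prop :=
  (S.biUnion L \ I).card = S.card

instance (L : Fin t → Finset (Fin k)) (I : Finset (Fin k)) : DecidablePred (TightSet L I) :=
  fun _ => Nat.decEq _ _

lemma biUnion_sdiff (L : Fin t → Finset (Fin k)) (S : Finset (Fin t)) (X : Finset (Fin k)) :
    (S.biUnion fun j => L j \ X) = S.biUnion L \ X := by
  ext x; simp only [mem_biUnion, mem_sdiff]; tauto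

lemma hallCond_iff (L : Fin t → Finset (Fin k)) (X : Finset (Fin k)) :
    HallCond L X ↔ ∃ c : Fin t → Fin k, Function.Injective c ∧ ∀ j, c j ∈ L j \ X :=
  Finset.all_card_le_biUnion_card_iff_exists_injective _

lemma tight_union (L : Fin t → Finset (Fin k)) (I : Finset (Fin k)) (hI : HallCond L I)
    {S S' : Finset (Fin t)} (hS : TightSet L I S) (hS' : TightSet L I S') :
    TightSet L I (S ∪ S') := by
  classical
  unfold TightSet at *
  have hU : (S ∪ S').biUnion L \ I = (S.biUnion L \ I) ∪ (S'.biUnion L \ I) := by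
    ext x
    simp only [mem_sdiff, mem_biUnion, mem_union]
    aesop
  have hInt : ((S ∩ S').biUnion L \ I) ⊆ (S.biUnion L \ I) ∩ (S'.biUnion L \ I) := by
    intro x hx
    simp only [mem_inter, mem_sdiff, mem_biUnion, mem_inter] at hx ⊢
    tauto
  have h1 := Finset.card_union_add_card_inter (S.biUnion L \ I) (S'.biUnion L \ I)
  have h2 := Finset.card_le_card hInt
  have h3 := hI (S ∪ S')
  have h4 := hI (S ∩ S')
  rw [biUnion_sdiff, hU] at h3
  rw [biUnion_sdiff] at h4
  have h5 := Finset.card_union_add_card_inter S S'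
  rw [hU]
  omega

lemma exists_max_tight (L : Fin t → Finset (Fin k)) (I : Finset (Fin k)) (hI : HallCond L I) :
    ∃ Sstar : Finset (Fin t), TightSet L I Sstar ∧ ∀ S, TightSet L I S → S ⊆ Sstar := by
  classical
  refine ⟨(Finset.univ.filter (TightSet L I)).sup id, ?_, ?_⟩
  · apply Finset.sup_induction
    · simp [TightSet]
    · intro a _ b _
      exact tight_union L I hI (by assumption) (by assumption)
    · intro S hS
      exact (Finset.mem_filter.mp hS).2
  · intro S hS
    exact Finset.le_sup (f := id) (Finset.mem_filter.mpr ⟨Finset.mem_univ _, hS⟩)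

/-- The key augmentation property. -/
lemma hall_aug (L : Fin t → Finset (Fin k)) (I J : Finset (Fin k))
    (hI : HallCond L I) (hJ : HallCond L J) (hIJ : I.card < J.card) :
    ∃ e ∈ J, e ∉ I ∧ HallCond L (insert e I) := by
  classical
  by_contra hcon
  push_neg at hcon
  obtain ⟨Sstar, hTstar, hmax⟩ := exists_max_tight L I hI
  -- every element of J \ I lies in `Sstar.biUnion L \ I`
  have hsub : ∀ e ∈ J, e ∉ I → e ∈ Sstar.biUnion L \ I := by
    intro e heJ heI
    obtain ⟨S, hS⟩ := not_forall.mp (hcon e heJ heI)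
    push_neg at hS
    have h1 : S.biUnion L \ insert e I = (S.biUnion L \ I).erase e := by
      ext x
      simp only [mem_sdiff, mem_insert, mem_erase]
      tauto
    rw [biUnion_sdiff, h1] at hS
    have h2 := hI S
    rw [biUnion_sdiff] at h2
    have hmem : e ∈ S.biUnion L \ I := by
      by_contra hne
      rw [Finset.erase_eq_of_notMem hne] at hS
      omega
    have hTS : TightSet L I S := by
      have := Finset.card_erase_of_mem hmem
      unfold TightSet
      omega
    have hSsub : S ⊆ Sstar := hmax S hTS
    have hBsub : S.biUnion L ⊆ Sstar.biUnion L :=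
      Finset.biUnion_subset_biUnion_of_subset_left _ hSsub
    exact Finset.mem_sdiff.mpr ⟨hBsub (Finset.mem_sdiff.mp hmem).1, heI⟩
  -- counting contradiction
  have hJI_sub : J \ I ⊆ Sstar.biUnion L := by
    intro x hx
    rcases Finset.mem_sdiff.mp hx with ⟨hxJ, hxI⟩
    exact (Finset.mem_sdiff.mp (hsub x hxJ hxI)).1
  have hA : (Sstar.biUnion L \ I).card = Sstar.card := hTstar
  have hB : Sstar.card ≤ (Sstar.biUnion L \ J).card := by
    have := hJ Sstar
    rwa [biUnion_sdiff] at this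
  have e1 := Finset.card_sdiff_add_card_inter (Sstar.biUnion L) I
  have e2 := Finset.card_sdiff_add_card_inter (Sstar.biUnion L) J
  have e3 : (Sstar.biUnion L ∩ J) \ I = J \ I := by
    ext x
    simp only [mem_sdiff, mem_inter]
    constructor
    · tauto
    · intro hx
      exact ⟨⟨hJI_sub (Finset.mem_sdiff.mpr hx), hx.1⟩, hx.2⟩
  have e4 := Finset.card_sdiff_add_card_inter (Sstar.biUnion L ∩ J) I
  have e5 := Finset.card_sdiff_add_card_inter (Sstar.biUnion L ∩ I) J
  have e6 : ((Sstar.biUnion L ∩ I) \ J).card ≤ (I \ J).card := by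
    apply Finset.card_le_card
    intro x hx
    simp only [mem_sdiff, mem_inter] at hx ⊢
    tauto
  have e7 : (Sstar.biUnion L ∩ I) ∩ J = (Sstar.biUnion L ∩ J) ∩ I := by
    ext x; simp only [mem_inter]; tauto
  have e8 := Finset.card_sdiff_add_card_inter I J
  have e9 := Finset.card_sdiff_add_card_inter J I
  have e10 : (I ∩ J).card = (J ∩ I).card := by rw [Finset.inter_comm]
  rw [e3] at e4
  rw [e7] at e5
  omega

end ExtAux

/-- `B` is a member of the family `𝓑`: it has `h` elements and the lists `L_1 ∖ B, …, L_t ∖ B`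
still admit a system of distinct representatives. -/
def IsExtensionBasis {k t : ℕ} (L : Fin t → Finset (Fin k)) (h : ℕ) (B : Set (Fin k)) : Prop :=
  B.ncard = h ∧ ∃ c : Fin t → Fin k, Function.Injective c ∧ ∀ j, c j ∈ L j ∧ c j ∉ B

/-- Let `t ≥ 1`, `h + t ≤ k`, and suppose the lists `L_1, …, L_t ⊆ {1, …, k}` admit a system of
distinct representatives.  Then the family of sets `B ⊆ {1, …, k}` of size `h` such that the
lists `L_1 ∖ B, …, L_t ∖ B` still admit a system of distinct representatives is nonempty, and
it is the collection of bases of a matroid on the ground set `{1, …, k}`. -/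
theorem extensionBases_form_matroid (k t h : ℕ) (ht : 1 ≤ t) (hhtk : h + t ≤ k)
    (L : Fin t → Finset (Fin k))
    (hSDR : ∃ c : Fin t → Fin k, Function.Injective c ∧ ∀ j, c j ∈ L j) :
    (∃ B : Set (Fin k), IsExtensionBasis L h B) ∧
    ∃ M : Matroid (Fin k), M.E = Set.univ ∧
      ∀ B : Set (Fin k), M.IsBase B ↔ IsExtensionBasis L h B := by
  classical
  open ExtAux in
  -- bridge between the set-level SDR condition and the Finset Hall condition
  have sdr_iff : ∀ X : Set (Fin k),
      (∃ c : Fin t → Fin k, Function.Injective c ∧ ∀ j, c j ∈ L j ∧ c j ∉ X) ↔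
        HallCond L X.toFinite.toFinset := by
    intro X
    rw [hallCond_iff]
    constructor <;> rintro ⟨c, hc, hcj⟩ <;> refine ⟨c, hc, fun j => ?_⟩ <;>
      have := hcj j <;> simp only [Finset.mem_sdiff, Set.Finite.mem_toFinset] at * <;> tauto
  have ncard_eq : ∀ X : Set (Fin k), X.ncard = X.toFinite.toFinset.card := fun X =>
    Set.ncard_eq_toFinset_card X X.toFinite
  -- the independence predicate
  set Ind : Set (Fin k) → Prop := fun X => X.ncard ≤ h ∧
      ∃ c : Fin t → Fin k, Function.Injective c ∧ ∀ j, c j ∈ L j ∧ c j ∉ X with hInd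
  -- an extension basis (of size h) exists
  obtain ⟨c0, hc0inj, hc0⟩ := hSDR
  have hrange : (Set.range c0).ncard = t := by
    rw [← Set.image_univ, Set.ncard_image_of_injective _ hc0inj, Set.ncard_univ, Nat.card_eq_fintype_card, Fintype.card_fin]
  have hcompl : ((Set.range c0)ᶜ : Set (Fin k)).ncard = k - t := by
    have := Set.ncard_add_ncard_compl (Set.range c0)
    rw [hrange, Nat.card_eq_fintype_card, Fintype.card_fin] at this
    omega
  obtain ⟨B0, hB0sub, hB0card⟩ := Set.exists_subset_card_eq (s := (Set.range c0)ᶜ) (n := h) (by omega)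
  have hB0 : IsExtensionBasis L h B0 := by
    refine ⟨hB0card, c0, hc0inj, fun j => ⟨hc0 j, fun hmem => ?_⟩⟩
    exact hB0sub hmem (Set.mem_range_self j)
  refine ⟨⟨B0, hB0⟩, ?_⟩
  -- build the matroid
  have indep_empty : Ind ∅ := by
    refine ⟨by simp, c0, hc0inj, fun j => ⟨hc0 j, by simp⟩⟩
  have indep_subset : ∀ ⦃I J : Set (Fin k)⦄, Ind J → I ⊆ J → Ind I := by
    rintro I J ⟨hcard, c, hcinj, hcj⟩ hIJ
    exact ⟨le_trans (Set.ncard_le_ncard hIJ J.toFinite) hcard, c, hcinj,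
      fun j => ⟨(hcj j).1, fun hmem => (hcj j).2 (hIJ hmem)⟩⟩
  have indep_aug : ∀ ⦃I J : Set (Fin k)⦄, Ind I → Ind J → I.ncard < J.ncard →
      ∃ e ∈ J, e ∉ I ∧ Ind (insert e I) := by
    rintro I J ⟨hIcard, hIsdr⟩ ⟨hJcard, hJsdr⟩ hlt
    have hI' : HallCond L I.toFinite.toFinset := (sdr_iff I).mp hIsdr
    have hJ' : HallCond L J.toFinite.toFinset := (sdr_iff J).mp hJsdr
    obtain ⟨e, heJ, heI, hhall⟩ := hall_aug L _ _ hI' hJ'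
      (by rw [← ncard_eq, ← ncard_eq]; exact hlt)
    rw [Set.Finite.mem_toFinset] at heJ
    rw [Set.Finite.mem_toFinset] at heI
    refine ⟨e, heJ, heI, ?_, ?_⟩
    · have := Set.ncard_insert_le e I
      have hcard2 : J.ncard ≤ h := hJcard
      omega
    · rw [sdr_iff]
      have heq : (insert e I : Set (Fin k)).toFinite.toFinset
          = insert e I.toFinite.toFinset := by
        rw [Set.Finite.toFinset_insert]
      rw [heq]
      exact hhall
  have subset_ground : ∀ ⦃I : Set (Fin k)⦄, Ind I → I ⊆ Set.univ := fun I _ =>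
    Set.subset_univ I
  set M : Matroid (Fin k) :=
    (IndepMatroid.ofFinite Set.finite_univ Ind indep_empty indep_subset indep_aug
      subset_ground).matroid with hM
  have hMindep : ∀ X : Set (Fin k), M.Indep X ↔ Ind X := by
    intro X
    rw [hM]
    simp
  have hME : M.E = Set.univ := by rw [hM]; rfl
  refine ⟨M, hME, ?_⟩
  -- the size-h basis B0 is independent
  have hB0ind : M.Indep B0 := (hMindep B0).mpr ⟨le_of_eq hB0card, hB0.2⟩
  intro B
  constructor
  · intro hBase
    have hBind : Ind B := (hMindep B).mp hBase.indep
    refine ⟨?_, hBind.2⟩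
    by_contra hne
    have hlt : B.ncard < h := lt_of_le_of_ne hBind.1 hne
    have henc : B.encard < B0.encard := by
      rw [← B.toFinite.cast_ncard_eq, ← B0.toFinite.cast_ncard_eq, hB0card]
      exact_mod_cast hlt
    obtain ⟨e, he, hins⟩ := hBase.indep.augment hB0ind henc
    have : B = insert e B := hBase.eq_of_subset_indep hins (Set.subset_insert e B)
    exact he.2 (this ▸ Set.mem_insert e B)
  · rintro ⟨hcard, hsdr⟩
    have hBind : M.Indep B := (hMindep B).mpr ⟨le_of_eq hcard, hsdr⟩
    obtain ⟨B', hB', hsub⟩ := hBind.exists_isBase_superset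
    have hB'ind : Ind B' := (hMindep B').mp hB'.indep
    have : B = B' := Set.eq_of_subset_of_ncard_le hsub (by rw [hcard]; exact hB'ind.1)
      B'.toFinite
    rwa [this]
end
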